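/- arXiv:math/0603506 — 5 statements merged into one kernel-verified Lean document; each statement's English description precedes it below -/
import Mathlib

section
/- Let E be an equivalence relation on a Polish space X whose graph is a Kσ subset of X × X, i.e. a countable union of compact sets. Then E is Borel reducible to the equivalence relation ℓ^∞ on ℝ^ℕ. -/
open TopologicalSpace Metric Set

/-- Borel reducibility of equivalence relations. -/
def BorelReducible {X Y : Type*} [MeasurableSpace X] [MeasurableSpace Y]
    (E : X → X → Prop) (F : Y → Y → Prop) : Prop :=
  ∃ θ : X → Y, Measurable θ ∧ ∀ x y : X, E x y ↔ F (θ x) (θ y)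

/-- The equivalence relation `ℓ^∞` on `ℝ^ℕ`: `x ~ y` iff `(x n - y n)` is bounded. -/
def linftyRel (x y : ℕ → ℝ) : Prop := ∃ C : ℝ, ∀ n : ℕ, |x n - y n| ≤ C

/-- Composition of relations (as subsets of `X × X`). -/
def relComp {X : Type*} (A B : Set (X × X)) : Set (X × X) :=
  {p | ∃ b, (p.1, b) ∈ A ∧ (b, p.2) ∈ B}

lemma mem_relComp {X : Type*} {A B : Set (X × X)} {a c : X} :
    (a, c) ∈ relComp A B ↔ ∃ b, (a, b) ∈ A ∧ (b, c) ∈ B := Iff.rfl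

lemma isCompact_relComp {X : Type*} [TopologicalSpace X] [T2Space X] {A B : Set (X × X)}
    (hA : IsCompact A) (hB : IsCompact B) : IsCompact (relComp A B) := by
  have h : relComp A B =
      (fun q : (X × X) × (X × X) => (q.1.1, q.2.2)) '' ((A ×ˢ B) ∩ {q | q.1.2 = q.2.1}) := by
    ext ⟨a, c⟩
    constructor
    · rintro ⟨b, h1, h2⟩
      exact ⟨((a, b), (b, c)), ⟨⟨h1, h2⟩, rfl⟩, rfl⟩
    · rintro ⟨⟨⟨a1, b1⟩, b2, c1⟩, ⟨⟨h1, h2⟩, (he : b1 = b2)⟩, hi⟩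
      simp only [Prod.mk.injEq] at hi
      obtain ⟨rfl, rfl⟩ := hi
      subst he
      exact ⟨b1, h1, h2⟩
  rw [h]
  exact ((hA.prod hB).inter_right (isClosed_eq continuous_fst.snd continuous_snd.fst)).image
    ((continuous_fst.fst).prodMk continuous_snd.snd)

/-- Rosendal: every `Kσ` equivalence relation on a Polish space is Borel
reducible to `ℓ^∞`. -/
theorem ksigma_reducible_to_linfty
    {X : Type*} [TopologicalSpace X] [PolishSpace X]
    [MeasurableSpace X] [BorelSpace X]
    (E : X → X → Prop) (hE : Equivalence E)
    (hKsigma : ∃ K : ℕ → Set (X × X), (∀ n, IsCompact (K n)) ∧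
      {p : X × X | E p.1 p.2} = ⋃ n, K n) :
    BorelReducible E linftyRel := by
  classical
  rcases isEmpty_or_nonempty X with hX | hX
  · exact ⟨fun x => isEmptyElim x, measurable_of_empty _, fun x y => isEmptyElim x⟩
  letI := upgradeIsCompletelyMetrizable X
  obtain ⟨K, hKcpt, hgraph⟩ := hKsigma
  -- close up the compact sets under symmetry and composition
  let L : ℕ → Set (X × X) := fun n =>
    Nat.rec (K 0 ∪ Prod.swap '' K 0)
      (fun n Ln => (K (n + 1) ∪ Prod.swap '' K (n + 1) ∪ Ln) ∪ relComp Ln Ln) n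
  have hL0 : L 0 = K 0 ∪ Prod.swap '' K 0 := rfl
  have hLs : ∀ n, L (n + 1) = (K (n + 1) ∪ Prod.swap '' K (n + 1) ∪ L n) ∪ relComp (L n) (L n) :=
    fun n => rfl
  have hcpt : ∀ n, IsCompact (L n) := by
    intro n
    induction n with
    | zero => exact (hKcpt 0).union ((hKcpt 0).image continuous_swap)
    | succ n ih =>
      rw [hLs]
      exact (((hKcpt (n + 1)).union ((hKcpt (n + 1)).image continuous_swap)).union ih).union
        (isCompact_relComp ih ih)
  have hsymm : ∀ n a b, (a, b) ∈ L n → (b, a) ∈ L n := by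
    intro n
    induction n with
    | zero =>
      rintro a b (h | ⟨p, hp, hpe⟩)
      · exact Or.inr ⟨(a, b), h, rfl⟩
      · refine Or.inl ?_
        have : p = (b, a) := by
          have := hpe
          cases p
          simp [Prod.swap] at this
          simp [this.1, this.2]
        rwa [this] at hp
    | succ n ih =>
      rintro a b h
      rw [hLs] at h ⊢
      rcases h with ((h | ⟨p, hp, hpe⟩) | h) | ⟨c, h1, h2⟩
      · exact Or.inl (Or.inl (Or.inr ⟨(a, b), h, rfl⟩))
      · refine Or.inl (Or.inl (Or.inl ?_))
        have : p = (b, a) := by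
          cases p
          simp [Prod.swap] at hpe
          simp [hpe.1, hpe.2]
        rwa [this] at hp
      · exact Or.inl (Or.inr (ih a b h))
      · exact Or.inr ⟨c, ih c b h2, ih a c h1⟩
  have hsubE : ∀ n a b, (a, b) ∈ L n → E a b := by
    have hK : ∀ n a b, (a, b) ∈ K n → E a b := by
      intro n a b h
      have : (a, b) ∈ {p : X × X | E p.1 p.2} := by
        rw [hgraph]; exact mem_iUnion.2 ⟨n, h⟩
      exact this
    intro n
    induction n with
    | zero =>
      rintro a b (h | ⟨p, hp, hpe⟩)
      · exact hK 0 a b h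
      · have : p = (b, a) := by
          cases p
          simp [Prod.swap] at hpe
          simp [hpe.1, hpe.2]
        subst this
        exact hE.symm (hK 0 b a hp)
    | succ n ih =>
      intro a b h
      rw [hLs] at h
      rcases h with ((h | ⟨p, hp, hpe⟩) | h) | ⟨c, h1, h2⟩
      · exact hK (n + 1) a b h
      · have : p = (b, a) := by
          cases p
          simp [Prod.swap] at hpe
          simp [hpe.1, hpe.2]
        subst this
        exact hE.symm (hK (n + 1) b a hp)
      · exact ih a b h
      · exact hE.trans (ih a c h1) (ih c b h2)
  have hmono : ∀ n, L n ⊆ L (n + 1) := by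
    intro n p hp
    rw [hLs]
    exact Or.inl (Or.inr hp)
  have hmono' : ∀ {m n}, m ≤ n → L m ⊆ L n := by
    intro m n h
    induction h with
    | refl => exact subset_rfl
    | step h ih => exact ih.trans (hmono _)
  have hcompose : ∀ n a b c, (a, b) ∈ L n → (b, c) ∈ L n → (a, c) ∈ L (n + 1) := by
    intro n a b c h1 h2
    rw [hLs]
    exact Or.inr ⟨b, h1, h2⟩
  have hKL : ∀ n, K n ⊆ L n := by
    intro n
    cases n with
    | zero => exact subset_union_left
    | succ n =>
      rw [hLs]
      exact fun p hp => Or.inl (Or.inl (Or.inl hp))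
  have hEL : ∀ a b, E a b → ∃ n, (a, b) ∈ L n := by
    intro a b h
    have : (a, b) ∈ ⋃ n, K n := by rw [← hgraph]; exact h
    obtain ⟨n, hn⟩ := mem_iUnion.1 this
    exact ⟨n, hKL n hn⟩
  -- the dense sequence and the approximating sets
  let dd : ℕ → X := denseSeq X
  have hdd : DenseRange dd := denseRange_denseSeq X
  let r : ℕ → ℝ := fun j => 1 / (j + 1)
  have hrpos : ∀ j, 0 < r j := fun j => by positivity
  let A : ℕ → ℕ → ℕ → Set X := fun m k j =>
    {x | ∃ z, (x, z) ∈ L m ∧ dist z (dd k) ≤ r j}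
  have hAclosed : ∀ m k j, IsClosed (A m k j) := by
    intro m k j
    have h : A m k j = Prod.fst '' (L m ∩ {p : X × X | dist p.2 (dd k) ≤ r j}) := by
      ext x
      constructor
      · rintro ⟨z, h1, h2⟩
        exact ⟨(x, z), ⟨h1, h2⟩, rfl⟩
      · rintro ⟨⟨x', z⟩, ⟨h1, h2⟩, rfl⟩
        exact ⟨z, h1, h2⟩
    rw [h]
    exact (((hcpt m).inter_right
      (isClosed_le (continuous_snd.dist continuous_const) continuous_const)).image
      continuous_fst).isClosed
  have hAmono : ∀ {m m'} (k j : ℕ), m ≤ m' → A m k j ⊆ A m' k j := by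
    rintro m m' k j h x ⟨z, h1, h2⟩
    exact ⟨z, hmono' h h1, h2⟩
  -- the coordinate functions
  let θc : X → ℕ → ℕ → ℕ := fun x k j => sInf {m | m = j ∨ x ∈ A m k j}
  have hne : ∀ x k j, {m | m = j ∨ x ∈ A m k j}.Nonempty := fun x k j => ⟨j, Or.inl rfl⟩
  have hθc_le : ∀ x k j m, (m = j ∨ x ∈ A m k j) → θc x k j ≤ m :=
    fun x k j m h => Nat.sInf_le h
  have hθc_mem : ∀ x k j, θc x k j = j ∨ x ∈ A (θc x k j) k j :=
    fun x k j => Nat.sInf_mem (hne x k j)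
  -- forward bound: moving along L p changes each coordinate by at most p + 1
  have h1 : ∀ p x y k j, (x, y) ∈ L p → θc y k j ≤ θc x k j + (p + 1) := by
    intro p x y k j hxy
    rcases hθc_mem x k j with ht | ht
    · exact (hθc_le y k j j (Or.inl rfl)).trans (by omega)
    · obtain ⟨z, hz1, hz2⟩ := ht
      set t := θc x k j with htdef
      have hyx : (y, x) ∈ L (max t p) := hmono' (le_max_right t p) (hsymm p x y hxy)
      have hxz : (x, z) ∈ L (max t p) := hmono' (le_max_left t p) hz1
      have hyz : (y, z) ∈ L (max t p + 1) := hcompose _ y x z hyx hxz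
      have hle : max t p + 1 ≤ t + p + 1 := by omega
      have hyz' : (y, z) ∈ L (t + p + 1) := hmono' hle hyz
      exact hθc_le y k j (t + p + 1) (Or.inr ⟨z, hyz', hz2⟩)
  -- the reduction map
  let e : ℕ × ℕ ≃ ℕ := Denumerable.eqv (ℕ × ℕ)
  refine ⟨fun x i => ((θc x (e.symm i).1 (e.symm i).2 : ℕ) : ℝ), ?_, ?_⟩
  · -- measurability
    apply measurable_pi_lambda
    intro i
    refine Measurable.comp (measurable_from_top (f := (Nat.cast : ℕ → ℝ))) ?_
    set k := (e.symm i).1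
    set j := (e.symm i).2
    apply measurable_to_countable'
    intro v
    have hch : (fun x => θc x k j) ⁻¹' {v} =
        ({x | v = j} ∪ A v k j) ∩ ⋂ (m : ℕ) (_ : m < v), ({x | m = j} ∪ A m k j)ᶜ := by
      ext x
      simp only [mem_preimage, mem_singleton_iff, mem_inter_iff, mem_union, mem_setOf_eq,
        mem_iInter, mem_compl_iff]
      constructor
      · intro h
        refine ⟨by rw [← h]; exact hθc_mem x k j, fun m hm => ?_⟩
        intro hmem
        have := hθc_le x k j m hmem
        omega
      · rintro ⟨h1, h2⟩
        refine le_antisymm (hθc_le x k j v h1) ?_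
        by_contra hlt
        push_neg at hlt
        exact h2 _ hlt (hθc_mem x k j)
    rw [hch]
    refine (MeasurableSet.union (MeasurableSet.const _)
      (hAclosed v k j).measurableSet).inter ?_
    exact MeasurableSet.iInter fun m => MeasurableSet.iInter fun _ =>
      (MeasurableSet.union (MeasurableSet.const _) (hAclosed m k j).measurableSet).compl
  · -- the reduction property
    intro x y
    constructor
    · intro hxy
      obtain ⟨p, hp⟩ := hEL x y hxy
      refine ⟨(p : ℝ) + 1, fun i => ?_⟩
      set k := (e.symm i).1
      set j := (e.symm i).2
      have ha : θc y k j ≤ θc x k j + (p + 1) := h1 p x y k j hp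
      have hb : θc x k j ≤ θc y k j + (p + 1) := h1 p y x k j (hsymm p x y hp)
      rw [abs_sub_le_iff]
      constructor
      · have : (θc x k j : ℝ) ≤ (θc y k j : ℝ) + ((p : ℝ) + 1) := by exact_mod_cast hb
        linarith
      · have : (θc y k j : ℝ) ≤ (θc x k j : ℝ) + ((p : ℝ) + 1) := by exact_mod_cast ha
        linarith
    · rintro ⟨C, hC⟩
      set N := ⌈C⌉₊ with hNdef
      have hCN : C ≤ (N : ℝ) := Nat.le_ceil C
      obtain ⟨n₀, hn₀⟩ := hEL x x (hE.refl x)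
      set M := n₀ + N with hMdef
      have key : ∀ k j, θc y k j ≤ θc x k j + N := by
        intro k j
        have := hC (e (k, j))
        simp only [Equiv.symm_apply_apply] at this
        have h2 : |(θc x k j : ℝ) - (θc y k j : ℝ)| ≤ (N : ℝ) := this.trans hCN
        rw [abs_sub_le_iff] at h2
        have : (θc y k j : ℝ) ≤ (θc x k j : ℝ) + (N : ℝ) := by linarith [h2.2]
        exact_mod_cast this
      have hyx : (y, x) ∈ L M := by
        have hclosed : IsClosed (L M) := (hcpt M).isClosed
        rw [← hclosed.closure_eq]
        rw [Metric.mem_closure_iff]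
        intro ε hε
        obtain ⟨j, hj⟩ := exists_nat_gt (max (M : ℝ) (2 / ε))
        have hjM : M < j := by
          have : (M : ℝ) < j := lt_of_le_of_lt (le_max_left _ _) hj
          exact_mod_cast this
        have hj2 : 2 * r j < ε := by
          have h2e : 2 / ε < (j : ℝ) := lt_of_le_of_lt (le_max_right _ _) hj
          have hj1 : (0 : ℝ) < (j : ℝ) + 1 := by positivity
          rw [div_lt_iff₀ hε] at h2e
          have : 2 * (1 / ((j : ℝ) + 1)) < ε := by
            rw [mul_one_div, div_lt_iff₀ hj1]
            nlinarith
          simpa [r] using this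
        obtain ⟨k, hk⟩ := hdd.exists_dist_lt x (hrpos j)
        have hx1 : θc x k j ≤ n₀ :=
          hθc_le x k j n₀ (Or.inr ⟨x, hn₀, hk.le⟩)
        have hy1 : θc y k j ≤ M := (key k j).trans (by omega)
        have hy2 : y ∈ A (θc y k j) k j := by
          rcases hθc_mem y k j with h | h
          · omega
          · exact h
        have hy3 : y ∈ A M k j := hAmono k j hy1 hy2
        obtain ⟨z, hz1, hz2⟩ := hy3
        refine ⟨(y, z), hz1, ?_⟩
        have hd : dist (y, x) (y, z) = dist x z := by
          rw [Prod.dist_eq]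
          simp [dist_self, max_eq_right dist_nonneg]
        rw [hd]
        calc dist x z ≤ dist x (dd k) + dist (dd k) z := dist_triangle _ _ _
          _ ≤ r j + r j := add_le_add hk.le (by rwa [dist_comm])
          _ = 2 * r j := by ring
          _ < ε := hj2
      exact hE.symm (hsubE M y x hyx)
end

section
/- The equivalence relation c₀ on ℝ^ℕ is Borel bireducible with E_{Z₀}: there is a Borel reduction of c₀ to E_{Z₀}, and a Borel reduction of E_{Z₀} to c₀. -/
open Filter

/-- The equivalence relation `c₀` on `ℝ^ℕ`: `x ~ y` iff `x n - y n → 0`. -/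
def c0Rel (x y : ℕ → ℝ) : Prop :=
  Tendsto (fun n : ℕ => x n - y n) atTop (nhds 0)

/-- The density-zero equivalence relation `E_{Z₀}` on `𝒫(ℕ) = 2^ℕ`:
`x ~ y` iff `|(x Δ y) ∩ [0,n)| / n → 0`. -/
def EZ0 (x y : ℕ → Bool) : Prop :=
  Tendsto (fun n : ℕ =>
      (((Finset.range n).filter (fun k => x k ≠ y k)).card : ℝ) / n)
    atTop (nhds 0)

section Aux
open Finset

lemma tendsto_zero_iff_finite (u : ℕ → ℝ) :
    Tendsto u atTop (nhds 0) ↔ ∀ ε > 0, {n | ε ≤ |u n|}.Finite := by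
  rw [← Nat.cofinite_eq_atTop, Metric.tendsto_nhds]
  constructor
  · intro h ε hε
    refine (eventually_cofinite.mp (h ε hε)).subset (fun n hn => ?_)
    simp only [Set.mem_setOf_eq, Real.dist_eq, sub_zero, not_lt] at hn ⊢
    exact hn
  · intro h ε hε
    rw [eventually_cofinite]
    refine (h ε hε).subset (fun n hn => ?_)
    simp only [Set.mem_setOf_eq, Real.dist_eq, sub_zero, not_lt] at hn ⊢
    exact hn

noncomputable def gfun (c r : ℝ) : ℝ := max 0 (min 1 (r - c))

lemma gfun_nonneg (c r : ℝ) : 0 ≤ gfun c r := le_max_left _ _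
lemma gfun_le_one (c r : ℝ) : gfun c r ≤ 1 := by
  unfold gfun; rcases le_or_gt (min 1 (r - c)) 0 with h | h
  · rw [max_eq_left h]; norm_num
  · rw [max_eq_right h.le]; exact min_le_left _ _

lemma gfun_lipschitz (c r r' : ℝ) : |gfun c r - gfun c r'| ≤ |r - r'| := by
  unfold gfun
  have h1 : |max 0 (min 1 (r - c)) - max 0 (min 1 (r' - c))| ≤ |min 1 (r - c) - min 1 (r' - c)| := by
    rw [max_comm 0 (min 1 (r - c)), max_comm 0 (min 1 (r' - c))]
    exact abs_max_sub_max_le_abs _ _ _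
  have h2 : |min 1 (r - c) - min 1 (r' - c)| ≤ |(r - c) - (r' - c)| := by
    refine (abs_min_sub_min_le_max 1 (r - c) 1 (r' - c)).trans ?_
    simp
  calc _ ≤ _ := h1
    _ ≤ _ := h2
    _ = |r - r'| := by ring_nf

lemma gfun_eq_zero {c r : ℝ} (h : r ≤ c) : gfun c r = 0 := by
  unfold gfun
  rw [max_eq_left]
  exact le_trans (min_le_right _ _) (by linarith)

lemma gfun_eq_one {c r : ℝ} (h : c + 1 ≤ r) : gfun c r = 1 := by
  unfold gfun
  rw [min_eq_left (by linarith), max_eq_right (by norm_num)]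

lemma gfun_eq_sub {c r : ℝ} (h1 : c ≤ r) (h2 : r ≤ c + 1) : gfun c r = r - c := by
  unfold gfun
  rw [min_eq_right (by linarith), max_eq_right (by linarith)]

/-- the witness lemma: some half-integer sees the truncated distance, up to factor 2 -/
lemma gfun_witness (r r' : ℝ) :
    ∃ z : ℤ, min |r - r'| 1 / 2 ≤ |gfun ((z : ℝ)/2) r - gfun ((z : ℝ)/2) r'| := by
  wlog hle : r ≤ r' generalizing r r'
  · obtain ⟨z, hz⟩ := this r' r (le_of_not_ge hle)
    rw [abs_sub_comm r' r, abs_sub_comm (gfun ((z:ℝ)/2) r') (gfun ((z:ℝ)/2) r)] at hz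
    exact ⟨z, hz⟩
  refine ⟨⌊2 * r⌋, ?_⟩
  set c : ℝ := (⌊2 * r⌋ : ℝ) / 2 with hc
  have hcr : c ≤ r := by
    rw [hc, div_le_iff₀ (by norm_num)]
    calc ((⌊2 * r⌋ : ℝ)) ≤ 2 * r := Int.floor_le _
      _ = r * 2 := by ring
  have hrc : r < c + 1/2 := by
    rw [hc]
    have := Int.lt_floor_add_one (2 * r)
    nlinarith
  have hg1 : gfun c r = r - c := gfun_eq_sub hcr (by linarith)
  rcases le_or_gt (r' - r) (1/2) with hd | hd
  · have hg2 : gfun c r' = r' - c := gfun_eq_sub (by linarith) (by linarith)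
    rw [hg1, hg2]
    have habs : |r - r'| = r' - r := by rw [abs_sub_comm]; exact abs_of_nonneg (by linarith)
    have : |(r - c) - (r' - c)| = r' - r := by
      rw [show (r - c) - (r' - c) = -(r' - r) by ring, abs_neg, abs_of_nonneg (by linarith)]
    rw [this, habs]
    rcases le_or_gt (r' - r) 1 with h1 | h1
    · rw [min_eq_left h1]; linarith
    · rw [min_eq_right h1.le]; linarith
  · have hg2 : 1/2 ≤ gfun c r' - gfun c r := by
      rcases le_or_gt (c + 1) r' with h1 | h1
      · rw [gfun_eq_one h1, hg1]; linarith
      · rw [gfun_eq_sub (by linarith) (by linarith), hg1]; linarith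
    have hmin : min |r - r'| 1 / 2 ≤ 1/2 := by
      have : min |r - r'| 1 ≤ 1 := min_le_right _ _
      linarith
    calc min |r - r'| 1 / 2 ≤ 1/2 := hmin
      _ ≤ |gfun c r - gfun c r'| := by
          rw [abs_sub_comm, abs_of_nonneg (by linarith)]; linarith

lemma sum_div_pow_tendsto (a : ℕ → ℝ) (ha : ∀ k, 0 ≤ a k)
    (h : Tendsto (fun k => a k / 2 ^ k) atTop (nhds 0)) :
    Tendsto (fun m => (∑ k ∈ range m, a k) / 2 ^ m) atTop (nhds 0) := by
  rw [Metric.tendsto_atTop] at h ⊢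
  intro ε hε
  obtain ⟨K, hK⟩ := h (ε / 4) (by linarith)
  have hK' : ∀ k ≥ K, a k ≤ (ε / 4) * 2 ^ k := by
    intro k hk
    have := hK k hk
    rw [Real.dist_eq, sub_zero, abs_of_nonneg (div_nonneg (ha k) (by positivity))] at this
    rw [div_lt_iff₀ (by positivity)] at this
    linarith
  set C : ℝ := ∑ k ∈ range K, a k with hC
  have hCnn : 0 ≤ C := Finset.sum_nonneg (fun k _ => ha k)
  -- choose M with 2^M > 2C/ε and M ≥ K
  obtain ⟨M0, hM0⟩ := pow_unbounded_of_one_lt (2 * C / ε) (by norm_num : (1:ℝ) < 2)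
  refine ⟨max M0 K, fun m hm => ?_⟩
  have hmK : K ≤ m := le_trans (le_max_right _ _) hm
  have hmM : M0 ≤ m := le_trans (le_max_left _ _) hm
  have hsplit : ∑ k ∈ range m, a k ≤ C + (ε / 4) * 2 ^ m := by
    rw [← Finset.sum_range_add_sum_Ico a hmK]
    have h1 : ∑ k ∈ Finset.Ico K m, a k ≤ ∑ k ∈ Finset.Ico K m, (ε / 4) * 2 ^ k :=
      Finset.sum_le_sum (fun k hk => hK' k (Finset.mem_Ico.mp hk).1)
    have h2 : ∑ k ∈ Finset.Ico K m, (ε / 4) * (2:ℝ) ^ k ≤ (ε / 4) * 2 ^ m := by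
      rw [← Finset.mul_sum]
      have : ∑ k ∈ Finset.Ico K m, (2:ℝ) ^ k ≤ ∑ k ∈ range m, (2:ℝ) ^ k :=
        Finset.sum_le_sum_of_subset_of_nonneg
          (by rw [← Nat.Ico_zero_eq_range]; exact Finset.Ico_subset_Ico (Nat.zero_le _) le_rfl)
          (fun k _ _ => by positivity)
      have hgeo : ∑ k ∈ range m, (2:ℝ) ^ k = 2 ^ m - 1 := by
        have := geom_sum_eq (by norm_num : (2:ℝ) ≠ 1) m
        rw [this]; norm_num
      nlinarith [hε]
    linarith
  have hpow : (2:ℝ) ^ M0 ≤ 2 ^ m := by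
    apply pow_le_pow_right₀ (by norm_num : (1:ℝ) ≤ 2) hmM
  have hCm : C / 2 ^ m < ε / 2 := by
    rw [div_lt_iff₀ (by positivity : (0:ℝ) < 2 ^ m)]
    have h2C : 2 * C / ε < 2 ^ m := lt_of_lt_of_le hM0 hpow
    rw [div_lt_iff₀ hε] at h2C
    nlinarith
  rw [Real.dist_eq, sub_zero, abs_of_nonneg (div_nonneg (Finset.sum_nonneg fun k _ => ha k) (by positivity))]
  have : (∑ k ∈ range m, a k) / 2 ^ m ≤ C / 2 ^ m + ε / 4 := by
    rw [div_add' _ _ _ (by positivity : ((2:ℝ) ^ m) ≠ 0)]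
    apply div_le_div_of_nonneg_right ?_ (by positivity)
    · linarith
  linarith

section Block
variable (d : ℕ → Prop) [DecidablePred d]

private def cnt (n : ℕ) : ℕ := ((range n).filter d).card
private def Hblk (k : ℕ) : ℕ := ((range (2^k)).filter (fun i => d (2^k + i))).card

lemma cnt_step (k : ℕ) : cnt d (2^(k+1)) = cnt d (2^k) + Hblk d k := by
  unfold cnt Hblk
  rw [pow_succ, mul_two, Finset.range_add, Finset.filter_union,
    Finset.card_union_of_disjoint, Finset.filter_map, Finset.card_map]
  · rfl
  · apply Finset.disjoint_filter_filter
    rw [Finset.disjoint_left]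
    intro a ha hb
    simp only [Finset.mem_range] at ha
    simp only [Finset.mem_map, addLeftEmbedding_apply] at hb
    obtain ⟨b, _, rfl⟩ := hb
    omega

lemma cnt_telescope (m : ℕ) : cnt d (2^m) = cnt d 1 + ∑ k ∈ range m, Hblk d k := by
  induction m with
  | zero => simp [pow_zero]
  | succ m ih => rw [cnt_step, ih, Finset.sum_range_succ]; ring

lemma cnt_mono : Monotone (cnt d) := fun a b hab =>
  Finset.card_le_card (Finset.filter_subset_filter _ (Finset.range_subset_range.mpr hab))

lemma tendsto_nat_pow_two : Tendsto (fun k : ℕ => (2:ℕ)^k) atTop atTop :=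
  tendsto_pow_atTop_atTop_of_one_lt (by norm_num)

lemma block_iff :
    Tendsto (fun n => ((cnt d n : ℝ)) / n) atTop (nhds 0) ↔
    Tendsto (fun k => ((Hblk d k : ℝ)) / 2^k) atTop (nhds 0) := by
  constructor
  · intro h
    have hcomp : Tendsto (fun k : ℕ => (cnt d (2^(k+1)) : ℝ) / (2^(k+1) : ℕ)) atTop (nhds 0) := by
      apply h.comp
      exact (tendsto_nat_pow_two).comp (tendsto_add_atTop_nat 1)
    have h2 : Tendsto (fun k : ℕ => 2 * ((cnt d (2^(k+1)) : ℝ) / (2^(k+1) : ℕ))) atTop (nhds 0) := by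
      simpa using hcomp.const_mul 2
    apply squeeze_zero (fun k => by positivity) (fun k => ?_) h2
    have hle : (Hblk d k : ℝ) ≤ cnt d (2^(k+1)) := by
      have := cnt_step d k
      have : Hblk d k ≤ cnt d (2^(k+1)) := by omega
      exact_mod_cast this
    have hpow : ((2 ^ (k+1) : ℕ) : ℝ) = 2 * 2^k := by push_cast [pow_succ]; ring
    rw [hpow]
    rw [div_le_iff₀ (by positivity : (0:ℝ) < 2^k)]
    have heq : 2 * ((cnt d (2^(k+1)) : ℝ)/(2*2^k)) * 2^k = cnt d (2^(k+1)) := by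
      field_simp
    rw [heq]
    exact hle
  · intro h
    have hG : Tendsto (fun m => (∑ k ∈ range m, (Hblk d k : ℝ)) / 2^m) atTop (nhds 0) :=
      sum_div_pow_tendsto _ (fun k => by positivity) h
    have hB : Tendsto (fun m => 2/2^m + 2 * ((∑ k ∈ range m, (Hblk d k : ℝ)) / 2^m))
        atTop (nhds 0) := by
      have h1 : Tendsto (fun m : ℕ => (2:ℝ)/2^m) atTop (nhds 0) := by
        have := tendsto_pow_atTop_nhds_zero_of_lt_one
          (by norm_num : (0:ℝ) ≤ 1/2) (by norm_num : (1:ℝ)/2 < 1)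
        have h2 := this.const_mul (2:ℝ)
        simp only [mul_zero] at h2
        convert h2 using 2 with m
        rw [div_pow, one_pow, mul_one_div]
      have h2 := hG.const_mul (2:ℝ)
      simp only [mul_zero] at h2
      simpa using h1.add h2
    have hL : Tendsto (fun n : ℕ => Nat.log 2 n + 1) atTop atTop := by
      apply tendsto_atTop_atTop.mpr
      intro b
      refine ⟨2^b, fun n hn => ?_⟩
      have hn0 : n ≠ 0 := by
        have h1 : 1 ≤ 2^b := Nat.one_le_two_pow
        omega
      have : b ≤ Nat.log 2 n := (Nat.le_log_iff_pow_le (by norm_num) hn0).mpr hn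
      omega
    have hcomp := hB.comp hL
    apply squeeze_zero' (g := fun n => 2/2^(Nat.log 2 n + 1)
        + 2 * ((∑ k ∈ range (Nat.log 2 n + 1), (Hblk d k : ℝ)) / 2^(Nat.log 2 n + 1)))
      (Eventually.of_forall (fun n => by positivity)) ?_ hcomp
    rw [eventually_atTop]
    refine ⟨1, fun n hn => ?_⟩
    show (cnt d n : ℝ)/n ≤ 2/2^(Nat.log 2 n + 1)
        + 2 * ((∑ k ∈ range (Nat.log 2 n + 1), (Hblk d k : ℝ)) / 2^(Nat.log 2 n + 1))
    set L := Nat.log 2 n + 1 with hLdef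
    have hn0 : n ≠ 0 := by omega
    have hlow : 2^(L - 1) ≤ n := by
      simpa [hLdef] using Nat.pow_log_le_self 2 hn0
    have hup : n < 2^L := Nat.lt_pow_succ_log_self (by norm_num) n
    have hcnt : (cnt d n : ℝ) ≤ 1 + ∑ k ∈ range L, (Hblk d k : ℝ) := by
      have h1 : cnt d n ≤ cnt d (2^L) := cnt_mono d (le_of_lt hup)
      rw [cnt_telescope] at h1
      have h2 : cnt d 1 ≤ 1 := by
        have h3 := Finset.card_filter_le (range 1) d
        simpa [cnt] using h3
      have : cnt d n ≤ 1 + ∑ k ∈ range L, Hblk d k := by omega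
      exact_mod_cast this
    have h2n : (2:ℝ)^L ≤ 2 * n := by
      have : (2:ℕ)^L ≤ 2 * n := by
        have hL1 : L - 1 + 1 = L := by omega
        calc (2:ℕ)^L = 2^(L-1) * 2 := by rw [← pow_succ, hL1]
          _ ≤ 2 * n := by omega
      exact_mod_cast this
    have hnn : (0:ℝ) < n := by exact_mod_cast Nat.pos_of_ne_zero hn0
    have hsum_nn : (0:ℝ) ≤ ∑ k ∈ range L, (Hblk d k : ℝ) := by positivity
    rw [div_le_iff₀ hnn]
    have hrhs : 2/2^L + 2 * ((∑ k ∈ range L, (Hblk d k : ℝ)) / 2^L)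
        = 2 * (1 + ∑ k ∈ range L, (Hblk d k : ℝ)) / 2^L := by ring
    rw [hrhs, div_mul_eq_mul_div, le_div_iff₀ (by positivity)]
    calc (cnt d n : ℝ) * 2^L ≤ (1 + ∑ k ∈ range L, (Hblk d k : ℝ)) * (2 * n) := by
          apply mul_le_mul hcnt h2n (by positivity) (by positivity)
      _ = 2 * (1 + ∑ k ∈ range L, (Hblk d k : ℝ)) * n := by ring
end Block


noncomputable def peq : ℕ ≃ ℕ × ℕ := (Denumerable.eqv (ℕ × ℕ)).symm
noncomputable def zeq : ℕ ≃ ℤ := (Denumerable.eqv ℤ).symm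
noncomputable def iota (k : ℕ) : ℝ := ((zeq k : ℤ) : ℝ) / 2
noncomputable def vfun (x : ℕ → ℝ) (m : ℕ) : ℝ := gfun (iota (peq m).2) (x (peq m).1)

lemma vfun_nonneg (x : ℕ → ℝ) (m : ℕ) : 0 ≤ vfun x m := gfun_nonneg _ _
lemma vfun_le_one (x : ℕ → ℝ) (m : ℕ) : vfun x m ≤ 1 := gfun_le_one _ _

lemma vdiff_iff (x y : ℕ → ℝ) :
    c0Rel x y ↔ Tendsto (fun m => vfun x m - vfun y m) atTop (nhds 0) := by
  rw [c0Rel, tendsto_zero_iff_finite, tendsto_zero_iff_finite]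
  constructor
  · intro h ε hε
    have hB := h ε hε
    have hK : ∀ n : ℕ, {k : ℕ | ε ≤ |gfun (iota k) (x n) - gfun (iota k) (y n)|}.Finite := by
      intro n
      have hsub : {k : ℕ | ε ≤ |gfun (iota k) (x n) - gfun (iota k) (y n)|} ⊆
          zeq ⁻¹' (Set.Icc ⌈2 * min (x n) (y n) - 2⌉ ⌊2 * max (x n) (y n)⌋) := by
        intro k hk
        simp only [Set.mem_setOf_eq] at hk
        have hne : gfun (iota k) (x n) ≠ gfun (iota k) (y n) := by
          intro heq
          rw [heq, sub_self, abs_zero] at hk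
          linarith
        constructor
        · rw [Int.ceil_le]
          by_contra hlt
          push_neg at hlt
          have h1 : (iota k) + 1 ≤ min (x n) (y n) := by
            unfold iota; linarith
          exact hne (by rw [gfun_eq_one (le_trans h1 (min_le_left _ _)),
            gfun_eq_one (le_trans h1 (min_le_right _ _))])
        · rw [Int.le_floor]
          by_contra hlt
          push_neg at hlt
          have h1 : max (x n) (y n) ≤ iota k := by
            unfold iota; linarith
          exact hne (by rw [gfun_eq_zero (le_trans (le_max_left _ _) h1),
            gfun_eq_zero (le_trans (le_max_right _ _) h1)])
      exact Set.Finite.subset (Set.Finite.preimage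
        (Set.injOn_of_injective zeq.injective) (Set.finite_Icc _ _)) hsub
    have heq : {m | ε ≤ |vfun x m - vfun y m|} =
        peq ⁻¹' {p : ℕ × ℕ | ε ≤ |gfun (iota p.2) (x p.1) - gfun (iota p.2) (y p.1)|} := rfl
    rw [heq]
    apply Set.Finite.preimage (Set.injOn_of_injective peq.injective)
    apply Set.Finite.subset (Set.Finite.biUnion hB (fun n _ =>
      Set.Finite.image (Prod.mk n) (hK n)))
    rintro ⟨n, k⟩ hp
    simp only [Set.mem_setOf_eq] at hp
    have hnB : n ∈ {n | ε ≤ |x n - y n|} := by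
      by_contra hn
      simp only [Set.mem_setOf_eq, not_le] at hn
      exact absurd (lt_of_le_of_lt (le_trans hp (gfun_lipschitz _ _ _)) hn) (lt_irrefl _)
    exact Set.mem_biUnion hnB ⟨k, hp, rfl⟩
  · intro h ε hε
    set δ := min ε 1 / 2 with hδdef
    have hδ : 0 < δ := by
      rw [hδdef]
      have : 0 < min ε 1 := lt_min hε one_pos
      linarith
    have hF := h δ hδ
    classical
    have hch : ∀ n ∈ {n | ε ≤ |x n - y n|}, ∃ k : ℕ,
        δ ≤ |gfun (iota k) (x n) - gfun (iota k) (y n)| := by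
      intro n hn
      simp only [Set.mem_setOf_eq] at hn
      obtain ⟨z, hz⟩ := gfun_witness (x n) (y n)
      refine ⟨zeq.symm z, ?_⟩
      have hiz : iota (zeq.symm z) = (z : ℝ) / 2 := by
        unfold iota; rw [Equiv.apply_symm_apply]
      rw [hiz]
      refine le_trans ?_ hz
      rw [hδdef]
      have h1 : min ε 1 ≤ min |x n - y n| 1 := by
        apply min_le_min hn le_rfl
      linarith
    set kch : ℕ → ℕ := fun n => if hn : n ∈ {n | ε ≤ |x n - y n|} then (hch n hn).choose else 0
      with hkch
    set f : ℕ → ℕ := fun n => peq.symm (n, kch n) with hf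
    apply Set.Finite.of_finite_image (f := f) ?_ ?_
    · apply Set.Finite.subset hF
      rintro m ⟨n, hn, rfl⟩
      have hkc : δ ≤ |gfun (iota (kch n)) (x n) - gfun (iota (kch n)) (y n)| := by
        rw [hkch]
        simp only [hn, dif_pos]
        exact (hch n hn).choose_spec
      simp only [Set.mem_setOf_eq, hf]
      have hv : ∀ w : ℕ → ℝ, vfun w (peq.symm (n, kch n)) = gfun (iota (kch n)) (w n) := by
        intro w
        unfold vfun
        rw [Equiv.apply_symm_apply]
      rw [hv, hv]
      exact hkc
    · intro a _ b _ hab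
      have := peq.symm.injective hab
      exact (Prod.mk.injEq _ _ _ _).mp this |>.1


noncomputable def theta1 (x : ℕ → ℝ) (i : ℕ) : Bool :=
  decide (((i - 2 ^ Nat.log 2 i : ℕ) : ℝ) < vfun x (Nat.log 2 i) * 2 ^ Nat.log 2 i)

lemma theta1_block (x : ℕ → ℝ) (m j : ℕ) (hj : j < 2^m) :
    theta1 x (2^m + j) = decide ((j : ℝ) < vfun x m * 2^m) := by
  have hlog : Nat.log 2 (2^m + j) = m := by
    apply Nat.log_eq_of_pow_le_of_lt_pow (Nat.le_add_right _ _)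
    rw [pow_succ]
    omega
  unfold theta1
  rw [hlog]
  have h2 : 2^m + j - 2^m = j := by omega
  rw [h2]

lemma measurable_theta1 : Measurable theta1 := by
  apply measurable_pi_lambda
  intro i
  apply measurable_to_bool
  have hmeas : Measurable fun x : ℕ → ℝ => vfun x (Nat.log 2 i) * 2 ^ Nat.log 2 i := by
    apply Measurable.mul_const
    unfold vfun
    have hg : Continuous (gfun (iota (peq (Nat.log 2 i)).2)) := by
      unfold gfun
      exact continuous_const.max (continuous_const.min
        (continuous_id.sub continuous_const))
    exact hg.measurable.comp (measurable_pi_apply _)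
  have : (fun x : ℕ → ℝ => theta1 x i) ⁻¹' {true}
      = (fun x : ℕ → ℝ => vfun x (Nat.log 2 i) * 2 ^ Nat.log 2 i) ⁻¹'
        (Set.Ioi ((i - 2 ^ Nat.log 2 i : ℕ) : ℝ)) := by
    ext x
    simp [theta1]
  rw [this]
  exact hmeas measurableSet_Ioi

/-- counting lemma: # of j < N with exactly one of (j < a), (j < b) is within 1 of |a-b| -/
lemma ceil_count (N : ℕ) (a b : ℝ) (ha0 : 0 ≤ a) (haN : a ≤ N) (hb0 : 0 ≤ b) (hbN : b ≤ N) :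
    abs (( ((range N).filter
        (fun j : ℕ => (decide ((j:ℝ) < a) : Bool) ≠ (decide ((j:ℝ) < b) : Bool))).card : ℝ)
      - |a - b|) ≤ 1 := by
  have key : ∀ a b : ℝ, 0 ≤ a → a ≤ N → 0 ≤ b → b ≤ N → a ≤ b →
      ((range N).filter
        (fun j : ℕ => (decide ((j:ℝ) < a) : Bool) ≠ (decide ((j:ℝ) < b) : Bool))) =
      Finset.Ico ⌈a⌉₊ ⌈b⌉₊ := by
    intro a b ha0 haN hb0 hbN hab
    ext j
    simp only [Finset.mem_filter, Finset.mem_range, Finset.mem_Ico, ne_eq,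
      decide_eq_decide]
    constructor
    · rintro ⟨hjN, hne⟩
      rcases lt_or_ge (j : ℝ) a with hja | hja
      · exact absurd (iff_of_true hja (lt_of_lt_of_le hja hab)) hne
      · have hjb : (j : ℝ) < b := by
          by_contra hjb
          push_neg at hjb
          exact hne (iff_of_false (not_lt.mpr hja) (not_lt.mpr hjb))
        exact ⟨Nat.ceil_le.mpr hja, Nat.lt_ceil.mpr hjb⟩
    · rintro ⟨hja, hjb⟩
      have h1 : ¬ ((j:ℝ) < a) := not_lt.mpr (Nat.ceil_le.mp hja)
      have h2 : (j : ℝ) < b := Nat.lt_ceil.mp hjb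
      refine ⟨?_, fun hiff => h1 (hiff.mpr h2)⟩
      have : ⌈b⌉₊ ≤ N := Nat.ceil_le.mpr hbN
      omega
  have habs : ∀ a b : ℝ, 0 ≤ a → 0 ≤ b → a ≤ b →
      abs (((⌈b⌉₊ - ⌈a⌉₊ : ℕ) : ℝ) - |a - b|) ≤ 1 := by
    intro a b ha0 hb0 hab
    have hcc : ⌈a⌉₊ ≤ ⌈b⌉₊ := Nat.ceil_le_ceil hab
    have hcast : ((⌈b⌉₊ - ⌈a⌉₊ : ℕ) : ℝ) = (⌈b⌉₊ : ℝ) - ⌈a⌉₊ := by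
      push_cast [hcc]
      ring
    rw [hcast]
    have hA1 : a ≤ ⌈a⌉₊ := Nat.le_ceil a
    have hA2 : (⌈a⌉₊ : ℝ) < a + 1 := Nat.ceil_lt_add_one ha0
    have hB1 : b ≤ ⌈b⌉₊ := Nat.le_ceil b
    have hB2 : (⌈b⌉₊ : ℝ) < b + 1 := Nat.ceil_lt_add_one hb0
    have habs2 : |a - b| = b - a := by
      rw [abs_sub_comm]; exact abs_of_nonneg (by linarith)
    rw [habs2, abs_le]
    constructor <;> linarith
  rcases le_total a b with hab | hab
  · rw [key a b ha0 haN hb0 hbN hab, Nat.card_Ico]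
    exact habs a b ha0 hb0 hab
  · have hcomm : ((range N).filter
        (fun j : ℕ => (decide ((j:ℝ) < a) : Bool) ≠ (decide ((j:ℝ) < b) : Bool))) =
        ((range N).filter
        (fun j : ℕ => (decide ((j:ℝ) < b) : Bool) ≠ (decide ((j:ℝ) < a) : Bool))) := by
      apply Finset.filter_congr
      intro j _
      simp only [ne_eq, decide_eq_decide, eq_iff_iff]
      tauto
    rw [hcomm, key b a hb0 hbN ha0 haN hab, Nat.card_Ico, abs_sub_comm a b]
    exact habs b a hb0 ha0 hab

lemma tendsto_of_close (u w : ℕ → ℝ) (hu : ∀ n, 0 ≤ u n) (hw : ∀ n, 0 ≤ w n)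
    (hclose : ∀ n, |u n - w n| ≤ (1/2 : ℝ)^n) :
    Tendsto u atTop (nhds 0) ↔ Tendsto w atTop (nhds 0) := by
  have hpow : Tendsto (fun n : ℕ => ((1:ℝ)/2)^n) atTop (nhds 0) :=
    tendsto_pow_atTop_nhds_zero_of_lt_one (by norm_num) (by norm_num)
  constructor <;> intro h
  · have hsum := h.add hpow
    rw [add_zero] at hsum
    apply squeeze_zero hw (fun n => ?_) hsum
    have := abs_le.mp (hclose n)
    linarith [this.1]
  · have hsum := h.add hpow
    rw [add_zero] at hsum
    apply squeeze_zero hu (fun n => ?_) hsum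
    have := abs_le.mp (hclose n)
    linarith [this.2]

lemma hblk_theta1_close (x y : ℕ → ℝ) (m : ℕ) :
    abs (((Hblk (fun i => theta1 x i ≠ theta1 y i) m : ℝ) / 2^m) - |vfun x m - vfun y m|)
      ≤ (1/2 : ℝ)^m := by
  have hcard : Hblk (fun i => theta1 x i ≠ theta1 y i) m =
      ((range (2^m)).filter
        (fun j : ℕ => (decide ((j:ℝ) < vfun x m * 2^m) : Bool)
          ≠ (decide ((j:ℝ) < vfun y m * 2^m) : Bool))).card := by
    unfold Hblk
    apply Finset.card_bij (fun a _ => a) ?_ ?_ ?_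
    · intro a ha
      simp only [Finset.mem_filter, Finset.mem_range] at ha ⊢
      obtain ⟨haR, hane⟩ := ha
      rw [theta1_block x m a haR, theta1_block y m a haR] at hane
      exact ⟨haR, hane⟩
    · intro a _ b _ h
      exact h
    · intro b hb
      simp only [Finset.mem_filter, Finset.mem_range] at hb ⊢
      obtain ⟨hbR, hbne⟩ := hb
      exact ⟨b, ⟨hbR, by rw [theta1_block x m b hbR, theta1_block y m b hbR]; exact hbne⟩, rfl⟩
  have h2m : (0:ℝ) < 2^m := by positivity
  have hbound := ceil_count (2^m) (vfun x m * 2^m) (vfun y m * 2^m)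
    (mul_nonneg (vfun_nonneg x m) (le_of_lt h2m))
    ?_ (mul_nonneg (vfun_nonneg y m) (le_of_lt h2m)) ?_
  · rw [hcard]
    push_cast
    have hdiff : |vfun x m * 2^m - vfun y m * 2^m| = |vfun x m - vfun y m| * 2^m := by
      rw [← sub_mul, abs_mul, abs_of_pos h2m]
    rw [hdiff] at hbound
    have hmain : abs (((((range (2^m)).filter
        (fun j : ℕ => (decide ((j:ℝ) < vfun x m * 2^m) : Bool)
          ≠ (decide ((j:ℝ) < vfun y m * 2^m) : Bool))).card : ℝ) / 2^m
        - |vfun x m - vfun y m|)) * 2^m ≤ 1 := by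
      rw [← abs_of_pos h2m, ← abs_mul, abs_of_pos h2m, sub_mul, div_mul_cancel₀ _ (ne_of_gt h2m)]
      push_cast at hbound ⊢
      convert hbound using 3
    calc abs (((((range (2^m)).filter
        (fun j : ℕ => (decide ((j:ℝ) < vfun x m * 2^m) : Bool)
          ≠ (decide ((j:ℝ) < vfun y m * 2^m) : Bool))).card : ℝ) / 2^m
        - |vfun x m - vfun y m|))
        = abs (((((range (2^m)).filter
        (fun j : ℕ => (decide ((j:ℝ) < vfun x m * 2^m) : Bool)
          ≠ (decide ((j:ℝ) < vfun y m * 2^m) : Bool))).card : ℝ) / 2^m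
        - |vfun x m - vfun y m|)) * 2^m / 2^m := by
          rw [mul_div_cancel_right₀ _ (ne_of_gt h2m)]
      _ ≤ 1 / 2^m := by gcongr
      _ = (1/2 : ℝ)^m := by rw [div_pow, one_pow]
  · calc vfun x m * 2^m ≤ 1 * 2^m := by
          apply mul_le_mul_of_nonneg_right (vfun_le_one x m) (le_of_lt h2m)
      _ = ((2^m : ℕ) : ℝ) := by push_cast; ring
  · calc vfun y m * 2^m ≤ 1 * 2^m := by
          apply mul_le_mul_of_nonneg_right (vfun_le_one y m) (le_of_lt h2m)
      _ = ((2^m : ℕ) : ℝ) := by push_cast; ring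

lemma dir1 : BorelReducible c0Rel EZ0 := by
  refine ⟨theta1, measurable_theta1, fun x y => ?_⟩
  have h3 : EZ0 (theta1 x) (theta1 y) ↔
      Tendsto (fun k => (Hblk (fun i => theta1 x i ≠ theta1 y i) k : ℝ)/2^k) atTop (nhds 0) :=
    block_iff (fun i => theta1 x i ≠ theta1 y i)
  rw [vdiff_iff, h3, tendsto_zero_iff_abs_tendsto_zero]
  apply tendsto_of_close
  · intro n; exact abs_nonneg _
  · intro n; positivity
  · intro n
    rw [abs_sub_comm]
    have := hblk_theta1_close x y n
    simpa [Function.comp] using this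

section Dir2

abbrev Jty := Σ k : ℕ, (Fin (2^k) → Bool)

noncomputable def Jeq : Jty ≃ ℕ :=
  letI : ∀ k : ℕ, Encodable (Fin (2^k) → Bool) := fun _ => Fintype.toEncodable _
  letI : Infinite Jty := Infinite.of_injective (fun k => (⟨k, fun _ => false⟩ : Jty))
    (fun a b h => congrArg Sigma.fst h)
  letI := Denumerable.ofEncodableOfInfinite Jty
  Denumerable.eqv Jty

def sbar (j : Jty) (i : ℕ) : Bool := if h : i < 2^j.1 then j.2 ⟨i, h⟩ else false

noncomputable def theta2 (x : ℕ → Bool) (m : ℕ) : ℝ :=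
  (((range (2^(Jeq.symm m).1)).filter
    (fun i => x (2^(Jeq.symm m).1 + i) ≠ sbar (Jeq.symm m) i)).card : ℝ) / 2^(Jeq.symm m).1

lemma card_tri (x y s : ℕ → Bool) (N c : ℕ) :
    ((range N).filter (fun i => x (c + i) ≠ s i)).card ≤
      ((range N).filter (fun i => y (c + i) ≠ s i)).card +
      ((range N).filter (fun i => x (c + i) ≠ y (c + i))).card := by
  calc ((range N).filter (fun i => x (c + i) ≠ s i)).card
      ≤ (((range N).filter (fun i => y (c + i) ≠ s i)) ∪
          ((range N).filter (fun i => x (c + i) ≠ y (c + i)))).card := by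
        apply Finset.card_le_card
        intro i hi
        simp only [Finset.mem_filter, Finset.mem_union] at hi ⊢
        obtain ⟨hiN, hne⟩ := hi
        by_cases hy : y (c + i) = s i
        · exact Or.inr ⟨hiN, fun hxy => hne (hxy.trans hy)⟩
        · exact Or.inl ⟨hiN, hy⟩
    _ ≤ _ := Finset.card_union_le _ _

lemma theta2_diff_le (x y : ℕ → Bool) (m : ℕ) :
    |theta2 x m - theta2 y m| ≤
      (Hblk (fun i => x i ≠ y i) (Jeq.symm m).1 : ℝ) / 2^(Jeq.symm m).1 := by
  set k := (Jeq.symm m).1 with hk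
  have h2k : (0:ℝ) < 2^k := by positivity
  have hH : Hblk (fun i => x i ≠ y i) k
      = ((range (2^k)).filter (fun i => x (2^k + i) ≠ y (2^k + i))).card := rfl
  rw [abs_sub_le_iff]
  constructor
  · unfold theta2
    rw [← hk, hH, div_sub_div_same, div_le_div_iff₀ h2k h2k]
    apply mul_le_mul_of_nonneg_right ?_ (le_of_lt h2k)
    have := card_tri x y (sbar (Jeq.symm m)) (2^k) (2^k)
    have hcast : (((range (2^k)).filter (fun i => x (2^k + i) ≠ sbar (Jeq.symm m) i)).card : ℝ)
        ≤ (((range (2^k)).filter (fun i => y (2^k + i) ≠ sbar (Jeq.symm m) i)).card : ℝ)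
          + (((range (2^k)).filter (fun i => x (2^k + i) ≠ y (2^k + i))).card : ℝ) := by
      exact_mod_cast this
    linarith
  · unfold theta2
    rw [← hk, hH, div_sub_div_same, div_le_div_iff₀ h2k h2k]
    apply mul_le_mul_of_nonneg_right ?_ (le_of_lt h2k)
    have := card_tri y x (sbar (Jeq.symm m)) (2^k) (2^k)
    have hcast : (((range (2^k)).filter (fun i => y (2^k + i) ≠ sbar (Jeq.symm m) i)).card : ℝ)
        ≤ (((range (2^k)).filter (fun i => x (2^k + i) ≠ sbar (Jeq.symm m) i)).card : ℝ)
          + (((range (2^k)).filter (fun i => y (2^k + i) ≠ x (2^k + i))).card : ℝ) := by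
      exact_mod_cast this
    have hsymm : ((range (2^k)).filter (fun i => y (2^k + i) ≠ x (2^k + i))).card
        = ((range (2^k)).filter (fun i => x (2^k + i) ≠ y (2^k + i))).card := by
      congr 1
      apply Finset.filter_congr
      intro i _
      simp [ne_comm]
    rw [hsymm] at hcast
    linarith

lemma theta2_witness_y (x y : ℕ → Bool) (k : ℕ) :
    theta2 y (Jeq ⟨k, fun i => y (2^k + i.1)⟩) = 0 := by
  unfold theta2
  rw [Equiv.symm_apply_apply]
  have : ((range (2^k)).filter
      (fun i => y (2^k + i) ≠ sbar ⟨k, fun i : Fin (2^k) => y (2^k + i.1)⟩ i)) = ∅ := by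
    apply Finset.filter_false_of_mem
    intro i hi
    simp only [Finset.mem_range] at hi
    simp [sbar, dif_pos hi]
  rw [this]
  simp

lemma theta2_witness_x (x y : ℕ → Bool) (k : ℕ) :
    theta2 x (Jeq ⟨k, fun i => y (2^k + i.1)⟩)
      = (Hblk (fun i => x i ≠ y i) k : ℝ) / 2^k := by
  unfold theta2
  rw [Equiv.symm_apply_apply]
  have : ((range (2^k)).filter
      (fun i => x (2^k + i) ≠ sbar ⟨k, fun i : Fin (2^k) => y (2^k + i.1)⟩ i))
      = ((range (2^k)).filter (fun i => x (2^k + i) ≠ y (2^k + i))) := by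
    apply Finset.filter_congr
    intro i hi
    simp only [Finset.mem_range] at hi
    unfold sbar
    simp [dif_pos hi]
  rw [this]
  rfl

lemma measurable_theta2 : Measurable theta2 := by
  apply measurable_pi_lambda
  intro m
  have heq : (fun x : ℕ → Bool => theta2 x m) =
      fun x => (∑ i ∈ range (2^(Jeq.symm m).1),
        if x (2^(Jeq.symm m).1 + i) ≠ sbar (Jeq.symm m) i then (1:ℝ) else 0)
          / 2^(Jeq.symm m).1 := by
    funext x
    unfold theta2
    congr 1
    rw [Finset.card_filter, Nat.cast_sum]
    apply Finset.sum_congr rfl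
    intro i _
    split <;> simp
  rw [heq]
  apply Measurable.div_const
  apply Finset.measurable_sum
  intro i _
  apply Measurable.ite ?_ measurable_const measurable_const
  have : {x : ℕ → Bool | x (2^(Jeq.symm m).1 + i) ≠ sbar (Jeq.symm m) i}
      = (fun x : ℕ → Bool => x (2^(Jeq.symm m).1 + i)) ⁻¹' {sbar (Jeq.symm m) i}ᶜ := rfl
  rw [this]
  exact (measurable_pi_apply _) ((measurableSet_singleton _).compl)

lemma finite_fiber (S : Set ℕ) (hS : S.Finite) : {m : ℕ | (Jeq.symm m).1 ∈ S}.Finite := by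
  have h1 : {j : Jty | j.1 ∈ S}.Finite := by
    apply Set.Finite.subset (Set.Finite.biUnion hS
      (fun k _ => (Set.finite_univ (α := Fin (2^k) → Bool)).image
        (fun s => (⟨k, s⟩ : Jty))))
    rintro ⟨k, s⟩ hk
    exact Set.mem_biUnion hk ⟨s, Set.mem_univ _, rfl⟩
  have h2 : {m : ℕ | (Jeq.symm m).1 ∈ S} = Jeq '' {j | j.1 ∈ S} := by
    ext m
    constructor
    · intro hm
      exact ⟨Jeq.symm m, hm, Equiv.apply_symm_apply _ _⟩
    · rintro ⟨j, hj, rfl⟩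
      simpa [Equiv.symm_apply_apply] using hj
  rw [h2]
  exact h1.image _

lemma dir2 : BorelReducible EZ0 c0Rel := by
  refine ⟨theta2, measurable_theta2, fun x y => ?_⟩
  have hEZ : EZ0 x y ↔
      Tendsto (fun k => (Hblk (fun i => x i ≠ y i) k : ℝ)/2^k) atTop (nhds 0) :=
    block_iff (fun i => x i ≠ y i)
  rw [hEZ]
  show _ ↔ Tendsto (fun n => theta2 x n - theta2 y n) atTop (nhds 0)
  rw [tendsto_zero_iff_finite, tendsto_zero_iff_finite]
  constructor
  · intro h ε hε
    have hfin := h ε hε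
    apply Set.Finite.subset (finite_fiber _ hfin)
    intro m hm
    simp only [Set.mem_setOf_eq] at hm ⊢
    have h1 := theta2_diff_le x y m
    have h2 : ε ≤ (Hblk (fun i => x i ≠ y i) (Jeq.symm m).1 : ℝ) / 2^(Jeq.symm m).1 :=
      le_trans hm h1
    exact le_trans h2 (le_abs_self _)
  · intro h ε hε
    have hfin := h ε hε
    apply Set.Finite.of_finite_image (f := fun k => Jeq ⟨k, fun i => y (2^k + i.1)⟩)
    · apply Set.Finite.subset hfin
      rintro m ⟨k, hk, rfl⟩
      simp only [Set.mem_setOf_eq] at hk ⊢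
      have hnn : (0:ℝ) ≤ (Hblk (fun i => x i ≠ y i) k : ℝ) / 2^k :=
        div_nonneg (Nat.cast_nonneg _) (by positivity)
      rw [theta2_witness_x x y k, theta2_witness_y x y k, sub_zero, abs_of_nonneg hnn]
      rwa [abs_of_nonneg hnn] at hk
    · intro a _ b _ hab
      exact congrArg Sigma.fst (Jeq.injective hab)

end Dir2


end Aux

/-- Oliver: `c₀` is Borel bireducible with `E_{Z₀}`. -/
theorem c0_bireducible_density : BorelReducible c0Rel EZ0 ∧ BorelReducible EZ0 c0Rel :=
  ⟨dir1, dir2⟩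
end

section
/- Let r : ℕ → ℝ satisfy r(n) ≥ 0 for all n, r(n) → 0 as n → ∞, and Σ_n r(n) = ∞. Then E_{S(r)} is Borel bireducible with the equivalence relation ℓ¹ on ℝ^ℕ: there is a Borel reduction of E_{S(r)} to ℓ¹ and a Borel reduction of ℓ¹ to E_{S(r)}. In particular, E₂ is Borel bireducible with ℓ¹. -/
open Filter

/-- The equivalence relation induced by the summable ideal `S(r)` on `𝒫(ℕ) = 2^ℕ`:
`x ~ y` iff `Σ_{n ∈ x Δ y} r n < ∞`. -/
def ESum (r : ℕ → ℝ) (x y : ℕ → Bool) : Prop :=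
  Summable (fun n : ℕ => if x n ≠ y n then r n else 0)

/-- The equivalence relation `ℓ¹` on `ℝ^ℕ`: `x ~ y` iff `Σ |x n - y n| < ∞`. -/
def l1Rel (x y : ℕ → ℝ) : Prop := Summable (fun n : ℕ => |x n - y n|)

/-- The equivalence relation `E₂`: `x E₂ y` iff `Σ_{n ∈ x Δ y} 1/(n+1) < ∞`. -/
def E2 (x y : ℕ → Bool) : Prop := ESum (fun n : ℕ => 1 / (n + 1)) x y

namespace SumBired

noncomputable section

/-- clamp to [0,1] -/
def cl (t : ℝ) : ℝ := min (max t 0) 1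

lemma cl_nonneg (t : ℝ) : 0 ≤ cl t := le_min (le_max_right _ _) zero_le_one

lemma cl_le_one (t : ℝ) : cl t ≤ 1 := min_le_right _ _

lemma cl_mono : Monotone cl := fun _ _ h => min_le_min (max_le_max h le_rfl) le_rfl

lemma cl_eq_self {t : ℝ} (h0 : 0 ≤ t) (h1 : t ≤ 1) : cl t = t := by
  unfold cl; rw [max_eq_left h0, min_eq_left h1]

/-- piece k of the unit decomposition of u -/
def dd (u : ℝ) (k : ℕ) : ℝ := min u ((k : ℝ) + 1) - min u (k : ℝ)

lemma dd_eq_cl (u : ℝ) (k : ℕ) : dd u k = cl (u - k) := by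
  unfold dd cl
  rcases le_total u (k : ℝ) with h | h
  · rw [min_eq_left (h.trans (by linarith)), min_eq_left h,
      max_eq_right (by linarith), min_eq_left (by linarith)]
    ring
  · rcases le_total u ((k : ℝ) + 1) with h' | h'
    · rw [min_eq_left h', min_eq_right h, max_eq_left (by linarith),
        min_eq_left (by linarith)]
    · rw [min_eq_right h', min_eq_right h, max_eq_left (by linarith),
        min_eq_right (by linarith)]
      ring

lemma dd_nonneg (u : ℝ) (k : ℕ) : 0 ≤ dd u k := dd_eq_cl u k ▸ cl_nonneg _

lemma dd_le_one (u : ℝ) (k : ℕ) : dd u k ≤ 1 := dd_eq_cl u k ▸ cl_le_one _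

lemma dd_mono (k : ℕ) : Monotone (fun u => dd u k) := by
  intro s t h
  simp only [dd_eq_cl]
  exact cl_mono (by linarith)

lemma hasSum_dd_sub {u v : ℝ} (h0 : 0 ≤ v) (hvu : v ≤ u) :
    HasSum (fun k => dd u k - dd v k) (u - v) := by
  have hnn : ∀ k, 0 ≤ dd u k - dd v k := fun k => sub_nonneg.2 (dd_mono k hvu)
  rw [hasSum_iff_tendsto_nat_of_nonneg hnn]
  have hps : ∀ N : ℕ, ∑ k ∈ Finset.range N, (dd u k - dd v k)
      = min u (N : ℝ) - min v (N : ℝ) := by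
    intro N
    have h1 : ∀ w : ℝ, 0 ≤ w → ∑ k ∈ Finset.range N, dd w k = min w (N : ℝ) := by
      intro w hw
      have key := Finset.sum_range_sub (fun m : ℕ => min w (m : ℝ)) N
      have : ∀ k : ℕ, dd w k = (fun m : ℕ => min w (m : ℝ)) (k + 1)
          - (fun m : ℕ => min w (m : ℝ)) k := by
        intro k
        simp only [dd, Nat.cast_add, Nat.cast_one]
      rw [Finset.sum_congr rfl fun k _ => this k, key]
      simp [min_eq_right hw]
    rw [Finset.sum_sub_distrib, h1 u (h0.trans hvu), h1 v h0]
  simp only [hps]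
  obtain ⟨N₀, hN₀⟩ := exists_nat_ge u
  apply Tendsto.congr' (f₁ := fun _ => u - v)
  · filter_upwards [eventually_ge_atTop N₀] with N hN
    have hu : u ≤ (N : ℝ) := hN₀.trans (by exact_mod_cast hN)
    rw [min_eq_left hu, min_eq_left (hvu.trans hu)]
  · exact tendsto_const_nhds

/-- positive/negative part -/
def part (c : Bool) (t : ℝ) : ℝ := if c then max t 0 else max (-t) 0

lemma part_true (t : ℝ) : part true t = max t 0 := rfl

lemma part_false (t : ℝ) : part false t = max (-t) 0 := rfl

lemma part_nonneg (c : Bool) (t : ℝ) : 0 ≤ part c t := by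
  cases c
  · rw [part_false]; exact le_max_right _ _
  · rw [part_true]; exact le_max_right _ _

lemma part_sub (t : ℝ) : part true t - part false t = t := by
  rw [part_true, part_false]
  rcases le_total t 0 with h | h
  · rw [max_eq_right h, max_eq_left (by linarith)]; ring
  · rw [max_eq_left h, max_eq_right (by linarith)]; ring

lemma part_identity (a b : ℝ) :
    |part true a - part true b| + |part false a - part false b| = |a - b| := by
  rcases le_total b a with h | h
  · have h1 : part true b ≤ part true a := by
      rw [part_true, part_true]; exact max_le_max h le_rfl
    have h2 : part false a ≤ part false b := by
      rw [part_false, part_false]; exact max_le_max (by linarith) le_rfl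
    rw [abs_of_nonneg (sub_nonneg.2 h1), abs_of_nonpos (sub_nonpos.2 h2),
      abs_of_nonneg (sub_nonneg.2 h)]
    have := part_sub a; have := part_sub b; linarith
  · have h1 : part true a ≤ part true b := by
      rw [part_true, part_true]; exact max_le_max h le_rfl
    have h2 : part false b ≤ part false a := by
      rw [part_false, part_false]; exact max_le_max (by linarith) le_rfl
    rw [abs_of_nonpos (sub_nonpos.2 h1), abs_of_nonneg (sub_nonneg.2 h2),
      abs_of_nonpos (sub_nonpos.2 h)]
    have := part_sub a; have := part_sub b; linarith

lemma hasSum_abs_dd (a b : ℝ) (c : Bool) :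
    HasSum (fun k => |dd (part c a) k - dd (part c b) k|) |part c a - part c b| := by
  rcases le_total (part c b) (part c a) with h | h
  · have hs := hasSum_dd_sub (part_nonneg c b) h
    have he : (fun k => |dd (part c a) k - dd (part c b) k|)
        = fun k => dd (part c a) k - dd (part c b) k :=
      funext fun k => abs_of_nonneg (sub_nonneg.2 (dd_mono k h))
    rw [he, abs_of_nonneg (sub_nonneg.2 h)]
    exact hs
  · have hs := hasSum_dd_sub (part_nonneg c a) h
    have he : (fun k => |dd (part c a) k - dd (part c b) k|)
        = fun k => dd (part c b) k - dd (part c a) k :=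
      funext fun k => by rw [abs_sub_comm]; exact abs_of_nonneg (sub_nonneg.2 (dd_mono k h))
    rw [he, abs_sub_comm, abs_of_nonneg (sub_nonneg.2 h)]
    exact hs

lemma part_continuous (c : Bool) : Continuous (part c) := by
  cases c
  · show Continuous fun t : ℝ => max (-t) 0
    exact continuous_neg.max continuous_const
  · show Continuous fun t : ℝ => max t 0
    exact continuous_id.max continuous_const

lemma dd_continuous (k : ℕ) : Continuous fun u => dd u k := by
  unfold dd
  exact (continuous_id.min continuous_const).sub (continuous_id.min continuous_const)

/-- per-coordinate summability package over Bool × ℕ -/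
lemma summable_G (a b : ℝ) :
    Summable (fun q : Bool × ℕ => |dd (part q.1 a) q.2 - dd (part q.1 b) q.2|) := by
  rw [summable_prod_of_nonneg (fun q => abs_nonneg _)]
  refine ⟨fun c => ?_, (hasSum_fintype _).summable⟩
  simpa using (hasSum_abs_dd a b c).summable

lemma tsum_G (a b : ℝ) :
    ∑' q : Bool × ℕ, |dd (part q.1 a) q.2 - dd (part q.1 b) q.2| = |a - b| := by
  rw [Summable.tsum_prod' (summable_G a b) (fun c => (hasSum_abs_dd a b c).summable), tsum_bool]
  rw [(hasSum_abs_dd a b true).tsum_eq, (hasSum_abs_dd a b false).tsum_eq]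
  rw [add_comm]
  exact part_identity a b

/-- the equivalence used to fold `ℕ × Bool × ℕ` into `ℕ` -/
def EE : (ℕ × Bool × ℕ) ≃ ℕ :=
  (Equiv.prodCongr (Equiv.refl ℕ) Equiv.boolProdNatEquivNat).trans (Denumerable.eqv (ℕ × ℕ))

/-- Borel reduction of `ℓ¹` to `ℓ¹` with values in `[0,1]` -/
def phi (x : ℕ → ℝ) (m : ℕ) : ℝ :=
  dd (part (EE.symm m).2.1 (x (EE.symm m).1)) (EE.symm m).2.2

lemma phi_nonneg (x : ℕ → ℝ) (m : ℕ) : 0 ≤ phi x m := dd_nonneg _ _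

lemma phi_le_one (x : ℕ → ℝ) (m : ℕ) : phi x m ≤ 1 := dd_le_one _ _

lemma phi_measurable : Measurable (phi : (ℕ → ℝ) → (ℕ → ℝ)) := by
  apply measurable_pi_lambda
  intro m
  have hc : Continuous (fun u : ℝ => dd (part (EE.symm m).2.1 u) (EE.symm m).2.2) :=
    (dd_continuous _).comp (part_continuous _)
  exact hc.measurable.comp (measurable_pi_apply _)

lemma phi_l1 (x y : ℕ → ℝ) : l1Rel x y ↔ l1Rel (phi x) (phi y) := by
  have hG : (fun m => |phi x m - phi y m|) =
      (fun p : ℕ × Bool × ℕ => |dd (part p.2.1 (x p.1)) p.2.2 - dd (part p.2.1 (y p.1)) p.2.2|)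
        ∘ EE.symm := rfl
  unfold l1Rel
  rw [hG, EE.symm.summable_iff,
    summable_prod_of_nonneg (fun p => abs_nonneg _)]
  constructor
  · intro h
    refine ⟨fun n => summable_G (x n) (y n), ?_⟩
    have : (fun n => ∑' q : Bool × ℕ, |dd (part q.1 (x n)) q.2 - dd (part q.1 (y n)) q.2|)
        = fun n => |x n - y n| := funext fun n => tsum_G (x n) (y n)
    rw [this]; exact h
  · rintro ⟨-, h⟩
    have : (fun n => ∑' q : Bool × ℕ, |dd (part q.1 (x n)) q.2 - dd (part q.1 (y n)) q.2|)
        = fun n => |x n - y n| := funext fun n => tsum_G (x n) (y n)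
    rw [this] at h; exact h

/-- partial sums -/
def S (r : ℕ → ℝ) (m : ℕ) : ℝ := ∑ i ∈ Finset.range m, r i

lemma S_mono {r : ℕ → ℝ} (hpos : ∀ n, 0 ≤ r n) : Monotone (S r) := fun _ _ h =>
  Finset.sum_le_sum_of_subset_of_nonneg (Finset.range_subset_range.2 h) (fun i _ _ => hpos i)

lemma exists_blocks (r : ℕ → ℝ) (hpos : ∀ n, 0 ≤ r n)
    (hlim : Tendsto r atTop (nhds 0)) (hdiv : ¬ Summable r) :
    ∃ a : ℕ → ℕ, (∀ n, a n < a (n + 1)) ∧ (∀ n i, a n ≤ i → r i ≤ (1/2 : ℝ) ^ n) ∧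
      (∀ n, 1 ≤ S r (a (n + 1)) - S r (a n)) := by
  have hsmall : ∀ n : ℕ, ∃ N, ∀ i, N ≤ i → r i ≤ (1/2 : ℝ) ^ n := by
    intro n
    have hpow : (0 : ℝ) < (1/2) ^ n := by positivity
    have hev := hlim.eventually_lt_const hpow
    rw [eventually_atTop] at hev
    obtain ⟨N, hN⟩ := hev
    exact ⟨N, fun i hi => (hN i hi).le⟩
  have hub : ∀ c : ℝ, ∃ m, c ≤ S r m := by
    have ht := (not_summable_iff_tendsto_nat_atTop_of_nonneg hpos).1 hdiv
    intro c
    exact (ht.eventually_ge_atTop c).exists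
  have step : ∀ n N : ℕ, ∃ M, N < M ∧ (∀ i, M ≤ i → r i ≤ (1/2 : ℝ) ^ (n + 1)) ∧
      1 ≤ S r M - S r N := by
    intro n N
    obtain ⟨N₁, hN₁⟩ := hsmall (n + 1)
    obtain ⟨m, hm⟩ := hub (S r N + 1)
    refine ⟨max (max (N + 1) N₁) m, ?_, ?_, ?_⟩
    · have : N + 1 ≤ max (max (N + 1) N₁) m := le_trans (le_max_left _ _) (le_max_left _ _)
      omega
    · intro i hi
      exact hN₁ i (le_trans (le_trans (le_max_right _ _) (le_max_left _ _)) hi)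
    · have := S_mono hpos (le_max_right (max (N + 1) N₁) m)
      linarith
  choose f hf1 hf2 hf3 using step
  obtain ⟨N₀, hN₀⟩ := hsmall 0
  refine ⟨fun n => Nat.rec N₀ (fun n an => f n an) n, fun n => hf1 n _, ?_, fun n => hf3 n _⟩
  intro n
  cases n with
  | zero => exact hN₀
  | succ n => exact hf2 n _

lemma summable_blocks {a : ℕ → ℕ} (hamono : StrictMono a) {h : ℕ → ℝ}
    (hh : ∀ i, 0 ≤ h i) (hz : ∀ i, i < a 0 → h i = 0) :
    Summable h ↔ Summable (fun n => ∑ i ∈ Finset.Ico (a n) (a (n + 1)), h i) := by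
  have key : ∀ N : ℕ, ∑ n ∈ Finset.range N, (∑ i ∈ Finset.Ico (a n) (a (n + 1)), h i)
      = ∑ i ∈ Finset.Ico (a 0) (a N), h i := by
    intro N
    induction N with
    | zero => simp
    | succ N ih =>
        rw [Finset.sum_range_succ, ih,
          Finset.sum_Ico_consecutive h (hamono.monotone (Nat.zero_le N))
            (hamono.monotone (Nat.le_succ N))]
  constructor
  · intro hs
    apply summable_of_sum_range_le (c := ∑' i, h i)
      (fun n => Finset.sum_nonneg fun i _ => hh i)
    intro N
    rw [key N]
    exact Summable.sum_le_tsum _ (fun i _ => hh i) hs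
  · intro hs
    apply summable_of_sum_range_le (c := ∑' n, ∑ i ∈ Finset.Ico (a n) (a (n + 1)), h i) hh
    intro M
    calc ∑ i ∈ Finset.range M, h i
        ≤ ∑ i ∈ Finset.range (a M), h i :=
          Finset.sum_le_sum_of_subset_of_nonneg
            (Finset.range_subset_range.2 hamono.le_apply) (fun i _ _ => hh i)
      _ = ∑ i ∈ Finset.Ico 0 (a 0), h i + ∑ i ∈ Finset.Ico (a 0) (a M), h i := by
          rw [Finset.sum_Ico_consecutive h (Nat.zero_le _) (hamono.monotone (Nat.zero_le M))]
          rw [Finset.range_eq_Ico]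
      _ = ∑ i ∈ Finset.Ico (a 0) (a M), h i := by
          rw [Finset.sum_eq_zero (fun i hi => hz i (Finset.mem_Ico.1 hi).2), zero_add]
      _ = ∑ n ∈ Finset.range M, (∑ i ∈ Finset.Ico (a n) (a (n + 1)), h i) := (key M).symm
      _ ≤ ∑' n, ∑ i ∈ Finset.Ico (a n) (a (n + 1)), h i :=
          Summable.sum_le_tsum _ (fun n _ => Finset.sum_nonneg fun i _ => hh i) hs

lemma summable_of_close {D e ε : ℕ → ℝ} (hD : ∀ n, 0 ≤ D n) (he : ∀ n, 0 ≤ e n)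
    (herr : ∀ n, |D n - e n| ≤ ε n) (hε : Summable ε) : Summable D ↔ Summable e := by
  constructor
  · intro hs
    apply Summable.of_nonneg_of_le he (fun n => ?_) (hs.add hε)
    have := abs_le.1 (herr n)
    linarith [this.1]
  · intro hs
    apply Summable.of_nonneg_of_le hD (fun n => ?_) (hs.add hε)
    have := abs_le.1 (herr n)
    linarith [this.2]

lemma red_l1_to_ESum (r : ℕ → ℝ) (hpos : ∀ n, 0 ≤ r n)
    (hlim : Tendsto r atTop (nhds 0)) (hdiv : ¬ Summable r) :
    BorelReducible l1Rel (ESum r) := by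
  obtain ⟨a, ha1, ha2, ha3⟩ := exists_blocks r hpos hlim hdiv
  have hamono : StrictMono a := strictMono_nat_of_lt_succ ha1
  have hstep : ∀ (n : ℕ) (t : ℝ), ∃ m, a n ≤ m ∧ cl t ≤ S r m - S r (a n) := fun n t =>
    ⟨a (n + 1), (ha1 n).le, le_trans (cl_le_one t) (by linarith [ha3 n])⟩
  set g : ℕ → ℝ → ℕ := fun n t => Nat.find (hstep n t) with hgdef
  have hg_ge : ∀ n t, a n ≤ g n t := fun n t => (Nat.find_spec (hstep n t)).1
  have hg_lb : ∀ n t, cl t ≤ S r (g n t) - S r (a n) := fun n t => (Nat.find_spec (hstep n t)).2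
  have hg_le : ∀ n t, g n t ≤ a (n + 1) := fun n t =>
    Nat.find_min' _ ⟨(ha1 n).le, le_trans (cl_le_one t) (by linarith [ha3 n])⟩
  have hg_ub : ∀ n t, S r (g n t) - S r (a n) ≤ cl t + (1/2 : ℝ) ^ n := by
    intro n t
    rcases Nat.eq_or_lt_of_le (hg_ge n t) with he | hlt
    · rw [← he]
      have : (0:ℝ) < (1/2) ^ n := by positivity
      have := cl_nonneg t
      linarith
    · have h1 : a n ≤ g n t - 1 := by omega
      have h2 : g n t - 1 < g n t := by omega
      have h3 := Nat.find_min (hstep n t) h2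
      push_neg at h3
      have h4 := h3 h1
      have h5 : S r (g n t) = S r (g n t - 1) + r (g n t - 1) := by
        have hge : g n t = (g n t - 1) + 1 := by omega
        rw [hge]
        exact Finset.sum_range_succ r (g n t - 1)
      have h6 : r (g n t - 1) ≤ (1/2 : ℝ) ^ n := ha2 n _ h1
      linarith
  have hg_mono : ∀ n, Monotone (g n) := fun n t t' h =>
    Nat.find_min' _ ⟨hg_ge n t', le_trans (cl_mono h) (hg_lb n t')⟩
  set bi : ℕ → ℕ := fun i => Nat.findGreatest (fun n => a n ≤ i) i with hbidef
  have hbi : ∀ n i, a n ≤ i → i < a (n + 1) → bi i = n := by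
    intro n i h1 h2
    have hni : n ≤ i := le_trans hamono.le_apply h1
    apply le_antisymm
    · by_contra hc
      push_neg at hc
      have h3 : a n ≤ i := h1
      have h4 : a (bi i) ≤ i :=
        Nat.findGreatest_spec (P := fun n => a n ≤ i) hni h1
      have h5 : a (n + 1) ≤ a (bi i) := hamono.monotone hc
      omega
    · exact Nat.le_findGreatest hni h1
  set ψ : (ℕ → ℝ) → ℕ → Bool :=
    fun x i => decide (a 0 ≤ i ∧ i < g (bi i) (x (bi i))) with hψdef
  have hψ_block : ∀ (x : ℕ → ℝ) n i, a n ≤ i → i < a (n + 1) →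
      ψ x i = decide (i < g n (x n)) := by
    intro x n i h1 h2
    have h0 : a 0 ≤ i := le_trans (hamono.monotone (Nat.zero_le n)) h1
    show decide (a 0 ≤ i ∧ i < g (bi i) (x (bi i))) = decide (i < g n (x n))
    rw [hbi n i h1 h2, decide_eq_decide]
    exact and_iff_right h0
  have hψ_low : ∀ (x : ℕ → ℝ) i, i < a 0 → ψ x i = false := by
    intro x i h
    show decide (a 0 ≤ i ∧ i < g (bi i) (x (bi i))) = false
    simp only [decide_eq_false_iff_not]
    rintro ⟨h1, -⟩
    omega
  -- block sums
  have hD_eq : ∀ (x y : ℕ → ℝ) n,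
      ∑ i ∈ Finset.Ico (a n) (a (n + 1)), (if ψ x i ≠ ψ y i then r i else 0)
        = |S r (g n (x n)) - S r (g n (y n))| := by
    intro x y n
    set g1 := g n (x n) with hg1
    set g2 := g n (y n) with hg2
    have hsub : Finset.Ico (min g1 g2) (max g1 g2) ⊆ Finset.Ico (a n) (a (n + 1)) :=
      Finset.Ico_subset_Ico (le_min (hg_ge n _) (hg_ge n _)) (max_le (hg_le n _) (hg_le n _))
    have hterm : ∀ i ∈ Finset.Ico (a n) (a (n + 1)),
        (if ψ x i ≠ ψ y i then r i else 0)
          = (if i ∈ Finset.Ico (min g1 g2) (max g1 g2) then r i else 0) := by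
      intro i hi
      rw [Finset.mem_Ico] at hi
      rw [hψ_block x n i hi.1 hi.2, hψ_block y n i hi.1 hi.2]
      have hiff : (decide (i < g1) ≠ decide (i < g2))
          ↔ (i ∈ Finset.Ico (min g1 g2) (max g1 g2)) := by
        rw [Finset.mem_Ico, ne_eq, decide_eq_decide]
        omega
      rw [if_congr hiff rfl rfl]
    rw [Finset.sum_congr rfl hterm, Finset.sum_ite_mem, Finset.inter_eq_right.2 hsub,
      Finset.sum_Ico_eq_sub r (min_le_max)]
    rcases le_total g1 g2 with h | h
    · rw [min_eq_left h, max_eq_right h, abs_sub_comm,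
        abs_of_nonneg (sub_nonneg.2 (S_mono hpos h))]
      rfl
    · rw [min_eq_right h, max_eq_left h, abs_of_nonneg (sub_nonneg.2 (S_mono hpos h))]
      rfl
  have herr : ∀ (x y : ℕ → ℝ) n,
      abs (|S r (g n (x n)) - S r (g n (y n))| - |cl (x n) - cl (y n)|) ≤ (1/2 : ℝ) ^ n := by
    intro x y n
    have h1 := hg_lb n (x n); have h2 := hg_ub n (x n)
    have h3 := hg_lb n (y n); have h4 := hg_ub n (y n)
    have key : |(S r (g n (x n)) - S r (g n (y n))) - (cl (x n) - cl (y n))| ≤ (1/2:ℝ)^n := by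
      rw [abs_le]
      constructor <;> linarith
    calc abs (|S r (g n (x n)) - S r (g n (y n))| - |cl (x n) - cl (y n)|)
        ≤ |(S r (g n (x n)) - S r (g n (y n))) - (cl (x n) - cl (y n))| :=
          abs_abs_sub_abs_le_abs_sub _ _
      _ ≤ (1/2:ℝ)^n := key
  -- the ψ equivalence
  have hψ_equiv : ∀ x y : ℕ → ℝ,
      (ESum r (ψ x) (ψ y) ↔ Summable (fun n => |cl (x n) - cl (y n)|)) := by
    intro x y
    have hz : ∀ i, i < a 0 → (if ψ x i ≠ ψ y i then r i else 0) = 0 := by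
      intro i hi
      rw [hψ_low x i hi, hψ_low y i hi]
      simp
    have hh : ∀ i, 0 ≤ (if ψ x i ≠ ψ y i then r i else 0) := by
      intro i
      split
      · exact hpos i
      · exact le_rfl
    unfold ESum
    rw [summable_blocks hamono hh hz]
    have hfun : (fun n => ∑ i ∈ Finset.Ico (a n) (a (n + 1)),
        (if ψ x i ≠ ψ y i then r i else 0))
        = fun n => |S r (g n (x n)) - S r (g n (y n))| := funext (hD_eq x y)
    rw [hfun]
    exact summable_of_close (fun n => abs_nonneg _) (fun n => abs_nonneg _)
      (herr x y) summable_geometric_two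
  -- measurability of ψ
  have hψ_meas : Measurable ψ := by
    apply measurable_pi_lambda
    intro i
    have h1 : Measurable (g (bi i)) := (hg_mono (bi i)).measurable
    have h2 : Measurable (fun m : ℕ => decide (a 0 ≤ i ∧ i < m)) := measurable_from_top
    exact (h2.comp h1).comp (measurable_pi_apply (bi i))
  -- assemble
  refine ⟨fun x => ψ (phi x), hψ_meas.comp phi_measurable, ?_⟩
  intro x y
  rw [phi_l1 x y, hψ_equiv (phi x) (phi y)]
  have hcl : (fun n => |cl (phi x n) - cl (phi y n)|) = fun n => |phi x n - phi y n| :=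
    funext fun n => by rw [cl_eq_self (phi_nonneg x n) (phi_le_one x n),
      cl_eq_self (phi_nonneg y n) (phi_le_one y n)]
  rw [hcl]
  exact Iff.rfl

end

end SumBired
-- need l1Rel def for this scratch file

namespace SumBired

lemma red_ESum_to_l1 (r : ℕ → ℝ) (hpos : ∀ n, 0 ≤ r n) : BorelReducible (ESum r) l1Rel := by
  refine ⟨fun x n => if x n then r n else 0, ?_, ?_⟩
  · apply measurable_pi_lambda
    intro n
    exact (measurable_from_top (f := fun b : Bool => if b then r n else 0)).comp
      (measurable_pi_apply n)
  · intro x y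
    unfold ESum l1Rel
    apply summable_congr
    intro n
    cases hx : x n <;> cases hy : y n <;>
      simp [hx, hy, abs_of_nonneg (hpos n)]

end SumBired


/-- (Kechris) For nonnegative weights `r n → 0` with divergent sum, `E_{S(r)}` is
Borel bireducible with `ℓ¹`; in particular `E₂` is Borel bireducible with `ℓ¹`. -/
theorem summable_bireducible_l1
    (r : ℕ → ℝ) (hpos : ∀ n, 0 ≤ r n)
    (hlim : Tendsto r atTop (nhds 0))
    (hdiv : ¬ Summable r) :
    (BorelReducible (ESum r) l1Rel ∧ BorelReducible l1Rel (ESum r)) ∧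
      (BorelReducible E2 l1Rel ∧ BorelReducible l1Rel E2) := by
  have main : ∀ s : ℕ → ℝ, (∀ n, 0 ≤ s n) → Tendsto s atTop (nhds 0) →
      ¬ Summable s → BorelReducible (ESum s) l1Rel ∧ BorelReducible l1Rel (ESum s) :=
    fun s h1 h2 h3 => ⟨SumBired.red_ESum_to_l1 s h1, SumBired.red_l1_to_ESum s h1 h2 h3⟩
  refine ⟨main r hpos hlim hdiv, ?_⟩
  have h1 : ∀ n : ℕ, 0 ≤ (1 : ℝ) / (n + 1) := fun n => by positivity
  have h2 : Tendsto (fun n : ℕ => 1 / ((n : ℝ) + 1)) atTop (nhds 0) :=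
    tendsto_one_div_add_atTop_nhds_zero_nat
  have h3 : ¬ Summable (fun n : ℕ => 1 / ((n : ℝ) + 1)) := by
    intro h
    apply Real.not_summable_one_div_natCast
    rw [← summable_nat_add_iff 1]
    convert h using 2 with n
    · rfl
    push_cast
    ring
  exact main _ h1 h2 h3
end

section
/- Let E be a Borel equivalence relation on a Polish space X, and suppose X = ⋃_{k∈ℕ} X_k where each X_k is a Borel subset of X and each restriction E↾X_k is smooth, i.e. for each k there is a Borel measurable map θ_k : X_k → 2^ℕ with x E y ↔ θ_k(x) = θ_k(y) for all x, y ∈ X_k. Then E is smooth: there is a Borel measurable map θ : X → 2^ℕ with x E y ↔ θ(x) = θ(y) for all x, y ∈ X. -/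
open MeasureTheory Set

set_option linter.unusedSectionVars false

section AssemblingAux

variable {X : Type*} [TopologicalSpace X] [PolishSpace X]
    [MeasurableSpace X] [BorelSpace X]

/-- The `E`-saturation of a set. -/
def ESatAux (E : X → X → Prop) (C : Set X) : Set X := {x | ∃ y ∈ C, E x y}

lemma eSatAux_eq (E : X → X → Prop) (C : Set X) :
    ESatAux E C = Prod.fst '' {p : X × X | p.2 ∈ C ∧ E p.1 p.2} := by
  ext x
  simp [ESatAux, Prod.exists, and_comm]

lemma kerAux_meas {g : X → ℕ → Bool} (hg : Measurable g) :
    MeasurableSet {p : X × X | g p.1 = g p.2} := by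
  have h : {p : X × X | g p.1 = g p.2} = ⋂ n, {p : X × X | g p.1 n = g p.2 n} := by
    ext p
    simp [funext_iff]
  rw [h]
  exact MeasurableSet.iInter fun n =>
    measurableSet_eq_fun
      ((measurable_pi_apply n).comp (hg.comp measurable_fst))
      ((measurable_pi_apply n).comp (hg.comp measurable_snd))

lemma extend_classifier_aux (E : X → X → Prop) (hE : Equivalence E)
    (hBorel : MeasurableSet {p : X × X | E p.1 p.2})
    {C : Set X} (hC : MeasurableSet C) {g : X → ℕ → Bool} (hg : Measurable g)
    (hΦ : ∀ x ∈ C, ∀ y ∈ C, (E x y ↔ g x = g y)) :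
    ∃ g' : X → ℕ → Bool, Measurable g' ∧
      (∀ x, ∀ x' ∈ C, E x x' → g' x = g x') ∧
      (∀ x ∈ ESatAux E C, ∀ y ∈ ESatAux E C, (E x y ↔ g' x = g' y)) := by
  classical
  set P : ℕ → Bool → Set X := fun n b => {x | ∃ y ∈ C, E x y ∧ g y n = b} with hP
  have hPan : ∀ n b, AnalyticSet (P n b) := by
    intro n b
    have heq : P n b = Prod.fst '' {p : X × X | p.2 ∈ C ∧ E p.1 p.2 ∧ g p.2 n = b} := by
      ext x
      simp [hP, Prod.exists, and_comm, and_assoc]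
    have hmeas : MeasurableSet {p : X × X | p.2 ∈ C ∧ E p.1 p.2 ∧ g p.2 n = b} := by
      refine (measurable_snd hC).inter (hBorel.inter ?_)
      exact ((measurable_pi_apply n).comp (hg.comp measurable_snd)) (measurableSet_singleton b)
    rw [heq]
    exact hmeas.analyticSet_image measurable_fst
  have hdisj : ∀ n, Disjoint (P n true) (P n false) := by
    intro n
    rw [Set.disjoint_left]
    rintro x ⟨y, hy, hxy, hyn⟩ ⟨y', hy', hxy', hy'n⟩
    have : E y y' := hE.trans (hE.symm hxy) hxy'
    have := (hΦ y hy y' hy').mp this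
    rw [this] at hyn
    rw [hyn] at hy'n
    exact Bool.noConfusion hy'n
  have hsep := fun n => (hPan n true).measurablySeparable (hPan n false) (hdisj n)
  choose u hu₁ hu₂ hu₃ using hsep
  set g' : X → ℕ → Bool := fun x n => if x ∈ u n then true else false with hg'def
  have hkey : ∀ x, ∀ x' ∈ C, E x x' → g' x = g x' := by
    intro x x' hx' hxx'
    funext n
    cases hb : g x' n with
    | false =>
      have hmem : x ∈ P n false := ⟨x', hx', hxx', hb⟩
      have : x ∉ u n := Set.disjoint_left.mp (hu₂ n) hmem
      simp [hg'def, this]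
    | true =>
      have hmem : x ∈ P n true := ⟨x', hx', hxx', hb⟩
      have : x ∈ u n := hu₁ n hmem
      simp [hg'def, this]
  refine ⟨g', ?_, hkey, ?_⟩
  · exact measurable_pi_lambda _ fun n => Measurable.ite (hu₃ n) measurable_const measurable_const
  · rintro x ⟨x', hx', hxx'⟩ y ⟨y', hy', hyy'⟩
    have e1 : g' x = g x' := hkey x x' hx' hxx'
    have e2 : g' y = g y' := hkey y y' hy' hyy'
    constructor
    · intro hxy
      have hx'y' : E x' y' := hE.trans (hE.trans (hE.symm hxx') hxy) hyy'
      rw [e1, e2, (hΦ x' hx' y' hy').mp hx'y']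
    · intro h
      have : g x' = g y' := by rw [← e1, ← e2, h]
      have hx'y' : E x' y' := (hΦ x' hx' y' hy').mpr this
      exact hE.trans (hE.trans hxx' hx'y') (hE.symm hyy')

lemma square_reflect_aux {Q : Set (X × X)} (hQ : MeasurableSet Q)
    {G : Set (X × X)} (hG : MeasurableSet G)
    (hGsymm : ∀ x y, (x, y) ∈ G → (y, x) ∈ G)
    (hSG : ∀ x ∈ Prod.fst '' Q, ∀ y ∈ Prod.fst '' Q, (x, y) ∈ G) :
    ∃ B : Set X, MeasurableSet B ∧ Prod.fst '' Q ⊆ B ∧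
      ∀ x ∈ B, ∀ y ∈ B, (x, y) ∈ G := by
  classical
  set S := Prod.fst '' Q with hSdef
  have hSan : AnalyticSet S := hQ.analyticSet_image measurable_fst
  -- initial set
  have hTSan : AnalyticSet {x | ∃ y ∈ S, (x, y) ∉ G} := by
    have heq : {x | ∃ y ∈ S, (x, y) ∉ G} =
        Prod.fst '' {r : X × (X × X) | r.2 ∈ Q ∧ (r.1, r.2.1) ∉ G} := by
      ext x
      constructor
      · rintro ⟨y, ⟨⟨y, z⟩, hQz, rfl⟩, hxy⟩
        exact ⟨(x, (y, z)), ⟨hQz, hxy⟩, rfl⟩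
      · rintro ⟨⟨x', y, z⟩, ⟨hQz, hxy⟩, rfl⟩
        exact ⟨y, ⟨(y, z), hQz, rfl⟩, hxy⟩
    have hmeas : MeasurableSet {r : X × (X × X) | r.2 ∈ Q ∧ (r.1, r.2.1) ∉ G} := by
      refine (measurable_snd hQ).inter ?_
      exact ((measurable_fst.prodMk (measurable_fst.comp measurable_snd)) hG).compl
    rw [heq]
    exact hmeas.analyticSet_image measurable_fst
  have hdisj0 : Disjoint S {x | ∃ y ∈ S, (x, y) ∉ G} := by
    rw [Set.disjoint_left]
    rintro x hx ⟨y, hy, hxy⟩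
    exact hxy (hSG x hx y hy)
  obtain ⟨u₀, hSu₀, hdu₀, hu₀meas⟩ := hSan.measurablySeparable hTSan hdisj0
  -- the invariant for the recursion
  have hA₀ : MeasurableSet u₀ ∧ S ⊆ u₀ ∧ ∀ x ∈ S, ∀ y ∈ u₀, (x, y) ∈ G := by
    refine ⟨hu₀meas, hSu₀, fun x hx y hy => ?_⟩
    have hyT : y ∉ {x | ∃ y ∈ S, (x, y) ∉ G} := fun h => Set.disjoint_right.mp hdu₀ hy h
    by_contra hxy
    exact hyT ⟨x, hx, fun h => hxy (hGsymm y x h)⟩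
  -- step
  have step : ∀ A : {A : Set X // MeasurableSet A ∧ S ⊆ A ∧ ∀ x ∈ S, ∀ y ∈ A, (x, y) ∈ G},
      ∃ A' : {A : Set X // MeasurableSet A ∧ S ⊆ A ∧ ∀ x ∈ S, ∀ y ∈ A, (x, y) ∈ G},
        A'.1 ⊆ A.1 ∧ ∀ x ∈ A'.1, ∀ y ∈ A.1, (x, y) ∈ G := by
    rintro ⟨A, hAmeas, hSA, hinv⟩
    have hTan : AnalyticSet {x | ∃ y ∈ A, (x, y) ∉ G} := by
      have heq : {x | ∃ y ∈ A, (x, y) ∉ G} =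
          Prod.fst '' {p : X × X | p.2 ∈ A ∧ p ∉ G} := by
        ext x
        constructor
        · rintro ⟨y, hy, hxy⟩
          exact ⟨(x, y), ⟨hy, hxy⟩, rfl⟩
        · rintro ⟨⟨x', y⟩, ⟨hy, hxy⟩, rfl⟩
          exact ⟨y, hy, hxy⟩
      rw [heq]
      exact ((measurable_snd hAmeas).diff hG).analyticSet_image measurable_fst
    have hdisj : Disjoint S {x | ∃ y ∈ A, (x, y) ∉ G} := by
      rw [Set.disjoint_left]
      rintro x hx ⟨y, hy, hxy⟩
      exact hxy (hinv x hx y hy)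
    obtain ⟨u, hSu, hdu, humeas⟩ := hSan.measurablySeparable hTan hdisj
    have hugood : ∀ x ∈ u, ∀ y ∈ A, (x, y) ∈ G := by
      intro x hx y hy
      have : x ∉ {x | ∃ y ∈ A, (x, y) ∉ G} := fun h => Set.disjoint_right.mp hdu hx h
      by_contra hxy
      exact this ⟨y, hy, hxy⟩
    refine ⟨⟨A ∩ u, hAmeas.inter humeas, subset_inter hSA hSu, ?_⟩, inter_subset_left, ?_⟩
    · exact fun x hx y hy => hinv x hx y hy.1
    · exact fun x hx y hy => hugood x hx.2 y hy
  choose nxt hn1 hn2 using step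
  let seq : ℕ → {A : Set X // MeasurableSet A ∧ S ⊆ A ∧ ∀ x ∈ S, ∀ y ∈ A, (x, y) ∈ G} :=
    fun j => Nat.rec ⟨u₀, hA₀⟩ (fun _ ih => nxt ih) j
  refine ⟨⋂ j, (seq j).1, MeasurableSet.iInter fun j => (seq j).2.1, ?_, ?_⟩
  · exact Set.subset_iInter fun j => (seq j).2.2.1
  · intro x hx y hy
    have hx1 : x ∈ (seq 1).1 := Set.mem_iInter.mp hx 1
    have hy0 : y ∈ (seq 0).1 := Set.mem_iInter.mp hy 0
    exact hn2 (seq 0) x hx1 y hy0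

lemma good_step_aux (E : X → X → Prop) (hE : Equivalence E)
    (hBorel : MeasurableSet {p : X × X | E p.1 p.2})
    {C : Set X} (hC : MeasurableSet C) {g : X → ℕ → Bool} (hg : Measurable g)
    (hΦ : ∀ x ∈ C, ∀ y ∈ C, (E x y ↔ g x = g y)) :
    ∃ (C' : Set X) (g' : X → ℕ → Bool), MeasurableSet C' ∧ Measurable g' ∧
      ESatAux E C ⊆ C' ∧ (∀ x ∈ C, g' x = g x) ∧
      (∀ x ∈ C', ∀ y ∈ C', (E x y ↔ g' x = g' y)) := by
  obtain ⟨g', hg', hkey, hΦ'⟩ := extend_classifier_aux E hE hBorel hC hg hΦ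
  set G : Set (X × X) := {p | E p.1 p.2 ↔ g' p.1 = g' p.2} with hGdef
  have hGmeas : MeasurableSet G := by
    have heq : G = ({p : X × X | E p.1 p.2} ∩ {p : X × X | g' p.1 = g' p.2}) ∪
        ({p : X × X | E p.1 p.2}ᶜ ∩ {p : X × X | g' p.1 = g' p.2}ᶜ) := by
      ext p
      simp only [hGdef, mem_setOf_eq, mem_union, mem_inter_iff, mem_compl_iff, mem_setOf_eq]
      tauto
    rw [heq]
    exact (hBorel.inter (kerAux_meas hg')).union (hBorel.compl.inter (kerAux_meas hg').compl)
  have hGsymm : ∀ x y, (x, y) ∈ G → (y, x) ∈ G := by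
    intro x y h
    simp only [hGdef, mem_setOf_eq] at h ⊢
    constructor
    · intro hyx; exact (h.mp (hE.symm hyx)).symm
    · intro e; exact hE.symm (h.mpr e.symm)
  have hQmeas : MeasurableSet {p : X × X | p.2 ∈ C ∧ E p.1 p.2} :=
    (measurable_snd hC).inter hBorel
  have hSeq : ESatAux E C = Prod.fst '' {p : X × X | p.2 ∈ C ∧ E p.1 p.2} := by
    ext x
    constructor
    · rintro ⟨y, hy, hxy⟩; exact ⟨(x, y), ⟨hy, hxy⟩, rfl⟩
    · rintro ⟨⟨x', y⟩, ⟨hy, hxy⟩, rfl⟩; exact ⟨y, hy, hxy⟩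
  have hSG : ∀ x ∈ Prod.fst '' {p : X × X | p.2 ∈ C ∧ E p.1 p.2},
      ∀ y ∈ Prod.fst '' {p : X × X | p.2 ∈ C ∧ E p.1 p.2}, (x, y) ∈ G := by
    intro x hx y hy
    rw [← hSeq] at hx hy
    exact hΦ' x hx y hy
  obtain ⟨B, hBmeas, hSB, hBG⟩ := square_reflect_aux hQmeas hGmeas hGsymm hSG
  refine ⟨B, g', hBmeas, hg', ?_, ?_, ?_⟩
  · rw [hSeq]; exact hSB
  · exact fun x hx => hkey x x hx (hE.refl x)
  · exact fun x hx y hy => hBG x hx y hy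

lemma piece_aux (E : X → X → Prop) (hE : Equivalence E)
    (hBorel : MeasurableSet {p : X × X | E p.1 p.2})
    {C0 : Set X} (hC0 : MeasurableSet C0) {g0 : X → ℕ → Bool} (hg0 : Measurable g0)
    (hΦ0 : ∀ x ∈ C0, ∀ y ∈ C0, (E x y ↔ g0 x = g0 y)) :
    ∃ (V : Set X) (ψ : X → ℕ → Bool), MeasurableSet V ∧ Measurable ψ ∧ C0 ⊆ V ∧
      (∀ x ∈ V, ∀ y, E x y → y ∈ V) ∧ (∀ x ∈ V, ∀ y ∈ V, (E x y ↔ ψ x = ψ y)) := by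
  classical
  have step : ∀ p : {p : Set X × (X → ℕ → Bool) // MeasurableSet p.1 ∧ Measurable p.2 ∧
        ∀ x ∈ p.1, ∀ y ∈ p.1, (E x y ↔ p.2 x = p.2 y)},
      ∃ q : {p : Set X × (X → ℕ → Bool) // MeasurableSet p.1 ∧ Measurable p.2 ∧
        ∀ x ∈ p.1, ∀ y ∈ p.1, (E x y ↔ p.2 x = p.2 y)},
        ESatAux E p.1.1 ⊆ q.1.1 ∧ ∀ x ∈ p.1.1, q.1.2 x = p.1.2 x := by
    rintro ⟨⟨C, g⟩, hC, hg, hΦ⟩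
    obtain ⟨C', g', hC', hg', hsat, hagree, hΦ'⟩ := good_step_aux E hE hBorel hC hg hΦ
    exact ⟨⟨(C', g'), hC', hg', hΦ'⟩, hsat, hagree⟩
  choose nxt hn1 hn2 using step
  let seq : ℕ → {p : Set X × (X → ℕ → Bool) // MeasurableSet p.1 ∧ Measurable p.2 ∧
      ∀ x ∈ p.1, ∀ y ∈ p.1, (E x y ↔ p.2 x = p.2 y)} :=
    fun j => Nat.rec ⟨(C0, g0), hC0, hg0, hΦ0⟩ (fun _ ih => nxt ih) j
  set Cs : ℕ → Set X := fun i => (seq i).1.1 with hCs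
  set gs : ℕ → X → ℕ → Bool := fun i => (seq i).1.2 with hgs
  have hseqsucc : ∀ i, seq (i + 1) = nxt (seq i) := fun i => rfl
  have hmono : ∀ i, Cs i ⊆ Cs (i + 1) := by
    intro i x hx
    exact hn1 (seq i) ⟨x, hx, hE.refl x⟩
  have hmonole : ∀ i j, i ≤ j → Cs i ⊆ Cs j := by
    intro i j hij
    induction j with
    | zero => rw [Nat.le_zero.mp hij]
    | succ j ih =>
      rcases Nat.lt_or_ge i (j + 1) with h | h
      · exact (ih (Nat.lt_succ_iff.mp h)).trans (hmono j)
      · rw [Nat.le_antisymm hij h]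
  have hinv : ∀ i, ∀ x ∈ Cs i, ∀ y, E x y → y ∈ Cs (i + 1) := by
    intro i x hx y hxy
    exact hn1 (seq i) ⟨x, hx, hE.symm hxy⟩
  have hstab : ∀ j i, i ≤ j → ∀ x ∈ Cs i, gs j x = gs i x := by
    intro j
    induction j with
    | zero => intro i hi x _; rw [Nat.le_zero.mp hi]
    | succ j ih =>
      intro i hi x hx
      rcases Nat.lt_or_ge i (j + 1) with h | h
      · have hij : i ≤ j := Nat.lt_succ_iff.mp h
        have hxj : x ∈ Cs j := hmonole i j hij hx
        have h2 := hn2 (seq j) x hxj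
        exact h2.trans (ih i hij x hx)
      · rw [Nat.le_antisymm hi h]
  -- totality predicate
  set p : ℕ → X → Prop := fun i x => x ∈ Cs i ∨ ∀ j, x ∉ Cs j with hp
  have hex : ∀ x, ∃ i, p i x := by
    intro x
    by_cases hx : ∃ i, x ∈ Cs i
    · obtain ⟨i, hi⟩ := hx
      exact ⟨i, Or.inl hi⟩
    · push_neg at hx
      exact ⟨0, Or.inr hx⟩
  have hpmeas : ∀ i, MeasurableSet {x | p i x} := by
    intro i
    have : {x | p i x} = Cs i ∪ ⋂ j, (Cs j)ᶜ := by
      ext x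
      simp [hp]
    rw [this]
    exact ((seq i).2.1).union (MeasurableSet.iInter fun j => ((seq j).2.1).compl)
  have hψmeas : Measurable fun x => gs (Nat.find (hex x)) x :=
    Measurable.find (fun i => (seq i).2.2.1) hpmeas hex
  refine ⟨⋃ i, Cs i, fun x => gs (Nat.find (hex x)) x,
    MeasurableSet.iUnion fun i => (seq i).2.1, hψmeas, ?_, ?_, ?_⟩
  · intro x hx
    exact Set.mem_iUnion.mpr ⟨0, hx⟩
  · intro x hx y hxy
    obtain ⟨i, hi⟩ := Set.mem_iUnion.mp hx
    exact Set.mem_iUnion.mpr ⟨i + 1, hinv i x hi y hxy⟩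
  · intro x hx y hy
    obtain ⟨ix0, hix0⟩ := Set.mem_iUnion.mp hx
    obtain ⟨iy0, hiy0⟩ := Set.mem_iUnion.mp hy
    have hxfind : x ∈ Cs (Nat.find (hex x)) := by
      rcases Nat.find_spec (hex x) with h | h
      · exact h
      · exact absurd hix0 (h ix0)
    have hyfind : y ∈ Cs (Nat.find (hex y)) := by
      rcases Nat.find_spec (hex y) with h | h
      · exact h
      · exact absurd hiy0 (h iy0)
    set i := max (Nat.find (hex x)) (Nat.find (hex y)) with hi
    have hxi : x ∈ Cs i := hmonole _ _ (le_max_left _ _) hxfind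
    have hyi : y ∈ Cs i := hmonole _ _ (le_max_right _ _) hyfind
    have ex : gs i x = gs (Nat.find (hex x)) x := hstab i _ (le_max_left _ _) x hxfind
    have ey : gs i y = gs (Nat.find (hex y)) y := hstab i _ (le_max_right _ _) y hyfind
    show E x y ↔ gs (Nat.find (hex x)) x = gs (Nat.find (hex y)) y
    rw [← ex, ← ey]
    exact (seq i).2.2.2 x hxi y hyi

end AssemblingAux

/-- Assembling smooth equivalence relations: if a Polish space is a countable
union of Borel sets on each of which the Borel equivalence relation `E` is
smooth, then `E` is smooth. -/
theorem assembling_smooth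
    {X : Type*} [TopologicalSpace X] [PolishSpace X]
    [MeasurableSpace X] [BorelSpace X]
    (E : X → X → Prop) (hE : Equivalence E)
    (hBorel : MeasurableSet {p : X × X | E p.1 p.2})
    (Xk : ℕ → Set X)
    (hXk : ∀ k, MeasurableSet (Xk k))
    (hcover : ⋃ k, Xk k = Set.univ)
    (hsmooth : ∀ k, ∃ θ : Xk k → (ℕ → Bool), Measurable θ ∧
      ∀ x y : Xk k, (E x.1 y.1 ↔ θ x = θ y)) :
    ∃ θ : X → (ℕ → Bool), Measurable θ ∧ ∀ x y : X, E x y ↔ θ x = θ y := by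
  classical
  -- extend the given classifiers to all of `X`
  have hex : ∀ k, ∃ g : X → ℕ → Bool, Measurable g ∧
      ∀ x ∈ Xk k, ∀ y ∈ Xk k, (E x y ↔ g x = g y) := by
    intro k
    obtain ⟨θ, hθ, hcl⟩ := hsmooth k
    refine ⟨fun x => if h : x ∈ Xk k then θ ⟨x, h⟩ else fun _ => false, ?_, ?_⟩
    · exact Measurable.dite hθ (measurable_const :
        Measurable fun _ : ((Xk k)ᶜ : Set X) => (fun _ => false : ℕ → Bool)) (hXk k)
    · intro x hx y hy
      simpa only [dif_pos hx, dif_pos hy] using hcl ⟨x, hx⟩ ⟨y, hy⟩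
  choose g0 hg0 hΦ0 using hex
  have hpiece := fun k => piece_aux E hE hBorel (hXk k) (hg0 k) (hΦ0 k)
  choose V ψ hVmeas hψmeas hsub hinvV hΦV using hpiece
  have exV : ∀ x, ∃ k, x ∈ V k := by
    intro x
    have hx : x ∈ ⋃ k, Xk k := hcover ▸ Set.mem_univ x
    obtain ⟨k, hk⟩ := Set.mem_iUnion.mp hx
    exact ⟨k, hsub k hk⟩
  -- encoding of a pair (k, c) as an element of Cantor space
  set enc : ℕ → (ℕ → Bool) → (ℕ → Bool) :=
    fun k c n => if n < k then true else if n = k then false else c (n - k - 1) with henc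
  have enc_inj : ∀ k k' c c', enc k c = enc k' c' → k = k' ∧ c = c' := by
    intro k k' c c' h
    have hkk : k = k' := by
      rcases lt_trichotomy k k' with hlt | heq | hgt
      · exfalso
        have h0 := congrFun h k
        have e1 : enc k c k = false := by simp [henc]
        have e2 : enc k' c' k = true := by simp [henc, hlt]
        rw [e1, e2] at h0
        exact Bool.noConfusion h0
      · exact heq
      · exfalso
        have h0 := congrFun h k'
        have e1 : enc k c k' = true := by simp [henc, hgt]
        have e2 : enc k' c' k' = false := by simp [henc]
        rw [e1, e2] at h0
        exact Bool.noConfusion h0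
    subst hkk
    refine ⟨rfl, funext fun n => ?_⟩
    have := congrFun h (k + 1 + n)
    have h1 : ¬ (k + 1 + n < k) := by omega
    have h2 : ¬ (k + 1 + n = k) := by omega
    have h3 : k + 1 + n - k - 1 = n := by omega
    simpa only [henc, if_neg h1, if_neg h2, h3] using this
  -- the final classifier
  have hK : ∀ x y, E x y → Nat.find (exV x) = Nat.find (exV y) := by
    intro x y hxy
    apply le_antisymm
    · exact Nat.find_le (hinvV _ y (Nat.find_spec (exV y)) x (hE.symm hxy))
    · exact Nat.find_le (hinvV _ x (Nat.find_spec (exV x)) y hxy)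
  refine ⟨fun x => enc (Nat.find (exV x)) (ψ (Nat.find (exV x)) x), ?_, ?_⟩
  · refine Measurable.find (f := fun k x => enc k (ψ k x)) (p := fun k x => x ∈ V k)
      (fun k => ?_) (fun k => hVmeas k) exV
    refine measurable_pi_lambda _ fun n => ?_
    by_cases h1 : n < k
    · simp only [henc, if_pos h1]; exact measurable_const
    · by_cases h2 : n = k
      · simp only [henc, if_neg h1, if_pos h2]; exact measurable_const
      · simp only [henc, if_neg h1, if_neg h2]
        exact (measurable_pi_apply _).comp (hψmeas k)
  · intro x y
    constructor
    · intro hxy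
      have hk := hK x y hxy
      have hx : x ∈ V (Nat.find (exV x)) := Nat.find_spec (exV x)
      have hy : y ∈ V (Nat.find (exV x)) := hk ▸ Nat.find_spec (exV y)
      have hv : ψ (Nat.find (exV x)) x = ψ (Nat.find (exV x)) y :=
        (hΦV _ x hx y hy).mp hxy
      show enc (Nat.find (exV x)) (ψ (Nat.find (exV x)) x)
          = enc (Nat.find (exV y)) (ψ (Nat.find (exV y)) y)
      rw [← hk, hv]
    · intro h
      obtain ⟨hk, hc⟩ := enc_inj _ _ _ _ h
      have hx : x ∈ V (Nat.find (exV x)) := Nat.find_spec (exV x)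
      have hy : y ∈ V (Nat.find (exV x)) := hk ▸ Nat.find_spec (exV y)
      exact (hΦV _ x hx y hy).mpr (by rw [hc, hk])
end

section
/- Let I be a nontrivial ideal on ℕ which, viewed as a subset of Cantor space 2^ℕ, has the Baire property. Then there is a sequence (w_k)_{k∈ℕ} of nonempty finite subsets of ℕ with max w_k < min w_{k+1} for all k, such that for every set A ⊆ ℕ: A is finite if and only if ⋃_{k∈A} w_k ∈ I. -/
private lemma cyl_subset_of_isOpen {U : Set (ℕ → Bool)} (hU : IsOpen U) {f : ℕ → Bool}
    (hf : f ∈ U) : ∃ N, ∀ g : ℕ → Bool, (∀ j < N, g j = f j) → g ∈ U := by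
  obtain ⟨s, u, h1, h2⟩ := isOpen_pi_iff.mp hU f hf
  refine ⟨(s.sup id) + 1, fun g hg => h2 ?_⟩
  intro a ha
  have : g a = f a := hg a (Nat.lt_succ_of_le (Finset.le_sup (f := id) ha))
  rw [this]
  exact (h1 a ha).2

private lemma cyl_isOpen (m : ℕ) (h : ℕ → Bool) : IsOpen {f : ℕ → Bool | ∀ j < m, f j = h j} := by
  have : {f : ℕ → Bool | ∀ j < m, f j = h j} = ⋂ j ∈ Finset.range m, (fun f : ℕ → Bool => f j) ⁻¹' {h j} := by
    ext f; simp
  rw [this]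
  exact isOpen_biInter_finset fun j _ => (continuous_apply j).isOpen_preimage _ (isOpen_discrete _)

private lemma core {D : Set (ℕ → Bool)} (hD : IsClosed D) (hnd : IsNowhereDense D) (n : ℕ) :
    ∃ p : ℕ × (ℕ → Bool), n < p.1 ∧
      ∀ f : ℕ → Bool, (∀ j, n ≤ j → j < p.1 → f j = p.2 j) → f ∉ D := by
  have hdense : Dense Dᶜ := (isClosed_isNowhereDense_iff_compl.mp ⟨hD, hnd⟩).2
  have key : ∀ L : List (ℕ → Bool), ∃ (m : ℕ) (σ : ℕ → Bool), n ≤ m ∧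
      ∀ τ ∈ L, ∀ f : ℕ → Bool, (∀ j < n, f j = τ j) →
        (∀ j, n ≤ j → j < m → f j = σ j) → f ∉ D := by
    intro L
    induction L with
    | nil => exact ⟨n, fun _ => false, le_refl n, by simp⟩
    | cons τ L ih =>
      obtain ⟨m, σ, hnm, hspec⟩ := ih
      set h : ℕ → Bool := fun j => if j < n then τ j else σ j with hh
      have hCopen := cyl_isOpen m h
      obtain ⟨g, hgC, hgD⟩ : ∃ g, g ∈ {f : ℕ → Bool | ∀ j < m, f j = h j} ∧ g ∈ Dᶜ := by
        obtain ⟨g, hg1, hg2⟩ := hdense.exists_mem_open hCopen ⟨h, fun j _ => rfl⟩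
        exact ⟨g, hg2, hg1⟩
      obtain ⟨N, hN⟩ := cyl_subset_of_isOpen hD.isOpen_compl hgD
      refine ⟨max (max m N) n, g, le_max_right _ _, ?_⟩
      intro τ' hτ' f hflo fhhi
      rcases List.mem_cons.mp hτ' with rfl | hτ'L
      · -- τ' = τ : f agrees with g below N, so f ∈ Dᶜ
        refine hN f fun j hj => ?_
        by_cases hjn : j < n
        · rw [hflo j hjn]
          have := hgC j (lt_of_lt_of_le hjn hnm)
          rw [this, hh]; simp [hjn]
        · exact fhhi j (le_of_not_gt hjn) (lt_of_lt_of_le hj (le_trans (le_max_right m N) (le_max_left _ n)))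
      · refine hspec τ' hτ'L f hflo fun j hj1 hj2 => ?_
        have hfg : f j = g j := fhhi j hj1 (lt_of_lt_of_le hj2 (le_trans (le_max_left m N) (le_max_left _ n)))
        have hgh : g j = h j := hgC j hj2
        rw [hfg, hgh, hh]
        simp [Nat.not_lt.mpr hj1]
  obtain ⟨m, σ, hnm, hspec⟩ := key
    (((Finset.univ : Finset (Fin n → Bool)).toList).map
      (fun t : Fin n → Bool => fun j : ℕ => if h : j < n then t ⟨j, h⟩ else false))
  refine ⟨(m + 1, σ), lt_of_le_of_lt hnm (Nat.lt_succ_self m), ?_⟩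
  intro f hf
  have hmem : (fun j : ℕ => if h : j < n then f j else false) ∈
      (((Finset.univ : Finset (Fin n → Bool)).toList).map
      (fun t : Fin n → Bool => fun j : ℕ => if h : j < n then t ⟨j, h⟩ else false)) := by
    simp only [List.mem_map, Finset.mem_toList]
    exact ⟨fun i => f i, Finset.mem_univ _, rfl⟩
  refine hspec _ hmem f (fun j hj => by simp [hj]) fun j hj1 hj2 => hf j hj1 (Nat.lt_succ_of_lt hj2)

private lemma nwd_union {X : Type*} [TopologicalSpace X] {A B : Set X}
    (hA : IsClosed A) (hA' : interior A = ∅) (hB' : interior B = ∅) :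
    interior (A ∪ B) = ∅ := by
  have h1 : interior (A ∪ B) \ A ⊆ interior B := by
    apply interior_maximal
    · rintro x ⟨hx, hxA⟩
      exact (interior_subset hx).resolve_left hxA
    · exact isOpen_interior.sdiff hA
  rw [hB'] at h1
  have h2 : interior (A ∪ B) ⊆ A := fun x hx => by
    by_contra hxA; exact h1 ⟨hx, hxA⟩
  have h3 : interior (A ∪ B) ⊆ interior A := interior_maximal h2 isOpen_interior
  rw [hA'] at h3
  exact Set.subset_empty_iff.mp h3

private lemma meagre_seq {T : Set (ℕ → Bool)} (hT : IsMeagre T) :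
    ∃ D : ℕ → Set (ℕ → Bool), (∀ k, IsClosed (D k)) ∧ (∀ k, interior (D k) = ∅) ∧
      (∀ j k, j ≤ k → D j ⊆ D k) ∧ T ⊆ ⋃ k, D k := by
  obtain ⟨S, hSnwd, hScnt, hTsub⟩ := isMeagre_iff_countable_union_isNowhereDense.mp hT
  have hS'cnt : (insert (∅ : Set (ℕ → Bool)) S).Countable := hScnt.insert _
  obtain ⟨e, he⟩ := Set.Countable.exists_eq_range hS'cnt (Set.insert_nonempty _ _)
  have henwd : ∀ k, IsNowhereDense (e k) := by
    intro k
    have : e k ∈ insert (∅ : Set (ℕ → Bool)) S := he ▸ Set.mem_range_self k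
    rcases this with h | h
    · rw [h]; exact isNowhereDense_empty
    · exact hSnwd _ h
  -- D k = closure (e 0) ∪ ... ∪ closure (e k), defined recursively
  obtain ⟨D, hD0, hDsucc⟩ : ∃ D : ℕ → Set (ℕ → Bool), D 0 = closure (e 0) ∧
      ∀ k, D (k + 1) = D k ∪ closure (e (k + 1)) :=
    ⟨fun k => Nat.rec (closure (e 0)) (fun k Dk => Dk ∪ closure (e (k + 1))) k, rfl, fun _ => rfl⟩
  have hclosed : ∀ k, IsClosed (D k) := by
    intro k; induction k with
    | zero => rw [hD0]; exact isClosed_closure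
    | succ k ih => rw [hDsucc]; exact ih.union isClosed_closure
  have hint : ∀ k, interior (D k) = ∅ := by
    intro k; induction k with
    | zero => rw [hD0]; exact isClosed_closure.isNowhereDense_iff.mp (henwd 0).closure
    | succ k ih =>
      rw [hDsucc]
      exact nwd_union (hclosed k) ih (isClosed_closure.isNowhereDense_iff.mp (henwd (k + 1)).closure)
  have hmono : ∀ j k, j ≤ k → D j ⊆ D k := by
    intro j k hjk
    induction k with
    | zero => rw [Nat.le_zero.mp hjk]
    | succ k ih =>
      rcases Nat.le_succ_iff.mp hjk with h | h
      · exact (ih h).trans (by rw [hDsucc]; exact Set.subset_union_left)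
      · rw [h]
  have hek : ∀ k, e k ⊆ D k := by
    intro k
    cases k with
    | zero => rw [hD0]; exact subset_closure
    | succ k => rw [hDsucc]; exact subset_closure.trans Set.subset_union_right
  refine ⟨D, hclosed, hint, hmono, hTsub.trans ?_⟩
  rintro x ⟨s, hsS, hxs⟩
  have : s ∈ insert (∅ : Set (ℕ → Bool)) S := Set.mem_insert_of_mem _ hsS
  rw [he] at this
  obtain ⟨k, rfl⟩ := this
  exact Set.mem_iUnion.mpr ⟨k, hek k hxs⟩

private lemma T_meagre (I : Set (Set ℕ))
    (hdown : ∀ x ∈ I, ∀ y ⊆ x, y ∈ I)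
    (hunion : ∀ x ∈ I, ∀ y ∈ I, x ∪ y ∈ I)
    (hfin : ∀ x : Set ℕ, x.Finite → x ∈ I)
    (hproper : Set.univ ∉ I)
    (hBP : ∃ U : Set (ℕ → Bool), IsOpen U ∧
      IsMeagre (({f : ℕ → Bool | {n : ℕ | f n = true} ∈ I} \ U) ∪
        (U \ {f : ℕ → Bool | {n : ℕ | f n = true} ∈ I}))) :
    IsMeagre {f : ℕ → Bool | {n : ℕ | f n = true} ∈ I} := by
  set T : Set (ℕ → Bool) := {f : ℕ → Bool | {n : ℕ | f n = true} ∈ I} with hT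
  obtain ⟨U, hUopen, hM⟩ := hBP
  rcases Set.eq_empty_or_nonempty U with rfl | ⟨f₀, hf₀⟩
  · refine hM.mono fun x hx => Or.inl ⟨hx, Set.notMem_empty x⟩
  exfalso
  obtain ⟨N, hN⟩ := cyl_subset_of_isOpen hUopen hf₀
  -- the flip homeomorphism
  set φfun : (ℕ → Bool) → (ℕ → Bool) := fun f j => if j < N then f j else !(f j) with hφfun
  have hφinv : ∀ f, φfun (φfun f) = f := by
    intro f; funext j
    by_cases h : j < N <;> simp [hφfun, h]
  have hφcont : Continuous φfun := by
    apply continuous_pi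
    intro j
    by_cases h : j < N
    · simpa [hφfun, h] using continuous_apply j
    · simpa [hφfun, h, Function.comp_def] using
        (continuous_of_discreteTopology (f := fun b : Bool => !b)).comp (continuous_apply j)
  set φ : (ℕ → Bool) ≃ₜ (ℕ → Bool) :=
    ⟨⟨φfun, φfun, hφinv, hφinv⟩, hφcont, hφcont⟩ with hφ
  set M := (T \ U) ∪ (U \ T) with hMdef
  have hM2 : IsMeagre (M ∪ φfun ⁻¹' M) := by
    have := hM.preimage_of_isOpenMap hφcont φ.isOpenMap
    rw [IsMeagre] at *
    rw [Set.compl_union]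
    exact Filter.inter_mem hM this
  have hdense : Dense (M ∪ φfun ⁻¹' M)ᶜ := dense_of_mem_residual hM2
  have hCopen := cyl_isOpen N f₀
  have hCne : ({f : ℕ → Bool | ∀ j < N, f j = f₀ j}).Nonempty := ⟨f₀, fun _ _ => rfl⟩
  obtain ⟨g, hg1, hg2⟩ := hdense.exists_mem_open hCopen hCne
  simp only [Set.mem_compl_iff, Set.mem_union, not_or] at hg1
  obtain ⟨hgM, hgφM⟩ := hg1
  have hgC : ∀ j < N, g j = f₀ j := hg2
  have hgU : g ∈ U := hN g hgC
  have hφgU : φfun g ∈ U := hN (φfun g) (fun j hj => by simp [hφfun, hj]; exact hgC j hj)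
  have hgT : g ∈ T := by
    by_contra h; exact hgM (Or.inr ⟨hgU, h⟩)
  have hφgT : φfun g ∈ T := by
    by_contra h; exact hgφM (Or.inr ⟨hφgU, h⟩)
  -- derive contradiction
  have hXI : {n : ℕ | g n = true} ∪ {n : ℕ | φfun g n = true} ∈ I :=
    hunion _ hgT _ hφgT
  have hYI : ({n : ℕ | g n = true} ∪ {n : ℕ | φfun g n = true}) ∪ {n : ℕ | n < N} ∈ I :=
    hunion _ hXI _ (hfin _ (Set.finite_Iio N))
  apply hproper
  refine hdown _ hYI _ fun n _ => ?_
  by_cases h : n < N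
  · exact Or.inr h
  · rcases Bool.eq_false_or_eq_true (g n) with hgn | hgn
    · exact Or.inl (Or.inl hgn)
    · refine Or.inl (Or.inr ?_)
      simp [hφfun, h, hgn]

theorem baire_ideal_blocks_main (I : Set (Set ℕ))
    (hdown : ∀ x ∈ I, ∀ y ⊆ x, y ∈ I)
    (hunion : ∀ x ∈ I, ∀ y ∈ I, x ∪ y ∈ I)
    (hfin : ∀ x : Set ℕ, x.Finite → x ∈ I)
    (hproper : Set.univ ∉ I)
    (hTm : IsMeagre {f : ℕ → Bool | {n : ℕ | f n = true} ∈ I})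
    (D : ℕ → Set (ℕ → Bool))
    (hDmono : ∀ j k, j ≤ k → D j ⊆ D k)
    (hTsub : {f : ℕ → Bool | {n : ℕ | f n = true} ∈ I} ⊆ ⋃ k, D k)
    (F : ℕ → ℕ → ℕ × (ℕ → Bool))
    (hF1 : ∀ k s, s < (F k s).1)
    (hF2 : ∀ k s, ∀ f : ℕ → Bool, (∀ j, s ≤ j → j < (F k s).1 → f j = (F k s).2 j) → f ∉ D k) :
    ∃ w : ℕ → Finset ℕ,
      (∀ k, (w k).Nonempty) ∧
      (∀ k, ∀ a ∈ w k, ∀ b ∈ w (k + 1), a < b) ∧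
      (∀ A : Set ℕ, A.Finite ↔ (⋃ k ∈ A, (w k : Set ℕ)) ∈ I) := by
  classical
  obtain ⟨n, hn0, hnsucc⟩ : ∃ n : ℕ → ℕ, n 0 = 0 ∧ ∀ k, n (k + 1) = (F k (n k)).1 :=
    ⟨fun k => Nat.rec 0 (fun k nk => (F k nk).1) k, rfl, fun _ => rfl⟩
  set σ : ℕ → ℕ → Bool := fun k => (F k (n k)).2 with hσ
  have hstrict : ∀ k, n k < n (k + 1) := fun k => (hnsucc k) ▸ hF1 k (n k)
  have hmono : ∀ j k, j ≤ k → n j ≤ n k := by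
    intro j k hjk
    induction k with
    | zero => rw [Nat.le_zero.mp hjk]
    | succ k ih =>
      rcases Nat.le_succ_iff.mp hjk with h | h
      · exact (ih h).trans (hstrict k).le
      · rw [h]
  have hspec : ∀ k, ∀ f : ℕ → Bool, (∀ j, n k ≤ j → j < n (k + 1) → f j = σ k j) → f ∉ D k := by
    intro k f hf
    exact hF2 k (n k) f fun j h1 h2 => hf j h1 ((hnsucc k) ▸ h2)
  set w : ℕ → Finset ℕ := fun k =>
    ((Finset.Ico (n (2 * k)) (n (2 * k + 1))).filter (fun j => σ (2 * k) j = true)) ∪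
      Finset.Ico (n (2 * k + 1)) (n (2 * k + 2)) with hw
  have hwsub : ∀ k, ∀ a ∈ w k, n (2 * k) ≤ a ∧ a < n (2 * k + 2) := by
    intro k a ha
    rw [hw] at ha
    simp only [Finset.mem_union, Finset.mem_filter, Finset.mem_Ico] at ha
    rcases ha with ⟨⟨h1, h2⟩, _⟩ | ⟨h1, h2⟩
    · exact ⟨h1, h2.trans_le (hmono _ _ (Nat.le_succ _))⟩
    · exact ⟨(hmono _ _ (Nat.le_succ _)).trans h1, h2⟩
  refine ⟨w, ?_, ?_, ?_⟩
  · intro k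
    have : (Finset.Ico (n (2 * k + 1)) (n (2 * k + 2))).Nonempty := by
      rw [Finset.nonempty_Ico]; exact hstrict _
    exact this.mono Finset.subset_union_right
  · intro k a ha b hb
    have h1 := (hwsub k a ha).2
    have h2 := (hwsub (k + 1) b hb).1
    have : n (2 * k + 2) ≤ n (2 * (k + 1)) := hmono _ _ (by omega)
    omega
  · intro A
    constructor
    · intro hA
      exact hfin _ (hA.biUnion fun k _ => (w k).finite_toSet)
    · intro hXI
      by_contra hAfin
      have hAinf : A.Infinite := hAfin
      set X : Set ℕ := ⋃ k ∈ A, (w k : Set ℕ) with hX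
      set f : ℕ → Bool := fun j => decide (j ∈ X) with hf
      have hfT : f ∈ {f : ℕ → Bool | {n : ℕ | f n = true} ∈ I} := by
        have : {m : ℕ | f m = true} = X := by
          ext m; simp [hf]
        simpa [this]
      obtain ⟨k₀, hk₀⟩ := Set.mem_iUnion.mp (hTsub hfT)
      obtain ⟨k, hkA, hkk₀⟩ := hAinf.exists_gt k₀
      have hfD : f ∉ D (2 * k) := by
        apply hspec (2 * k) f
        intro j hj1 hj2
        have hiff : j ∈ X ↔ σ (2 * k) j = true := by
          constructor
          · intro hjX
            obtain ⟨k', hk'A, hjk'⟩ : ∃ k' ∈ A, j ∈ w k' := by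
              simpa [hX] using hjX
            have hsub := hwsub k' j hjk'
            have hkk' : k' = k := by
              by_contra hne
              rcases Nat.lt_or_ge k' k with h | h
              · have : n (2 * k' + 2) ≤ n (2 * k) := hmono _ _ (by omega)
                omega
              · have hk'k : k < k' := by omega
                have : n (2 * k + 1) ≤ n (2 * k') := hmono _ _ (by omega)
                omega
            subst hkk'
            rw [hw] at hjk'
            simp only [Finset.mem_union, Finset.mem_filter, Finset.mem_Ico] at hjk'
            rcases hjk' with ⟨_, h⟩ | ⟨h1, _⟩
            · exact h
            · omega
          · intro hσj
            apply Set.mem_biUnion hkA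
            rw [hw]
            simp only [Finset.coe_union, Set.mem_union, Finset.coe_filter, Set.mem_setOf_eq,
              Finset.mem_Ico, Finset.coe_Ico, Set.mem_Ico]
            exact Or.inl ⟨⟨hj1, hj2⟩, hσj⟩
        rcases Bool.eq_false_or_eq_true (σ (2 * k) j) with hb | hb
        · rw [hb, hf]
          exact decide_eq_true (hiff.mpr hb)
        · rw [hb, hf]
          exact decide_eq_false (fun h => by rw [hiff.mp h] at hb; exact Bool.noConfusion hb)
      exact hfD (hDmono k₀ (2 * k) (by omega) hk₀)

/-- (Jalali-Naini, Mathias, Talagrand) If `I` is a nontrivial ideal on `ℕ` with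
the Baire property (as a subset of Cantor space), then there is a sequence of
consecutive nonempty finite blocks `w_k` such that a set `A ⊆ ℕ` is finite
exactly when `⋃_{k ∈ A} w_k ∈ I`. -/
theorem baire_ideal_blocks (I : Set (Set ℕ))
    (hdown : ∀ x ∈ I, ∀ y ⊆ x, y ∈ I)
    (hunion : ∀ x ∈ I, ∀ y ∈ I, x ∪ y ∈ I)
    (hfin : ∀ x : Set ℕ, x.Finite → x ∈ I)
    (hproper : Set.univ ∉ I)
    (hBP : ∃ U : Set (ℕ → Bool), IsOpen U ∧
      IsMeagre (({f : ℕ → Bool | {n : ℕ | f n = true} ∈ I} \ U) ∪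
        (U \ {f : ℕ → Bool | {n : ℕ | f n = true} ∈ I}))) :
    ∃ w : ℕ → Finset ℕ,
      (∀ k, (w k).Nonempty) ∧
      (∀ k, ∀ a ∈ w k, ∀ b ∈ w (k + 1), a < b) ∧
      (∀ A : Set ℕ, A.Finite ↔ (⋃ k ∈ A, (w k : Set ℕ)) ∈ I) := by
  have hTm := T_meagre I hdown hunion hfin hproper hBP
  obtain ⟨D, hDclosed, hDint, hDmono, hTsub⟩ := meagre_seq hTm
  have hcore : ∀ (k s : ℕ), ∃ p : ℕ × (ℕ → Bool), s < p.1 ∧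
      ∀ f : ℕ → Bool, (∀ j, s ≤ j → j < p.1 → f j = p.2 j) → f ∉ D k :=
    fun k s => core (hDclosed k) ((hDclosed k).isNowhereDense_iff.mpr (hDint k)) s
  choose F hF1 hF2 using hcore
  exact baire_ideal_blocks_main I hdown hunion hfin hproper hTm D hDmono hTsub F hF1 hF2
end
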